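/- arXiv:1710.04739 — 5 statements merged into one kernel-verified Lean document; each statement's English description precedes it below -/
import Mathlib

section
/- Let σ = (s_{i,j}) be an n×n shift matrix. The k-subspace g_σ := {A ∈ gl_n(k[t]) : t^{s_{i,j}} divides the (i,j)-entry of A for all 1 ≤ i,j ≤ n} is a Lie subalgebra of gl_n(k[t]), and it is generated as a Lie algebra by the set {e_{i,i}t^r : 1 ≤ i ≤ n, r ≥ 0} ∪ {e_{i,i+1}t^r : 1 ≤ i < n, r ≥ s_{i,i+1}} ∪ {e_{i+1,i}t^r : 1 ≤ i < n, r ≥ s_{i+1,i}}. -/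
namespace CurrentAlgebraPaper

attribute [local instance 100] LieRing.ofAssociativeRing

/-- The element `e_{i,j} t^r` of the current algebra `gl_n(k[t])`. -/
noncomputable def E (k : Type) [Field k] (n : ℕ) (i j : Fin n) (r : ℕ) :
    Matrix (Fin n) (Fin n) (Polynomial k) :=
  Matrix.single i j (Polynomial.X ^ r)

section Aux

variable (k : Type) [Field k] (n : ℕ)

lemma lie_E (i j l : Fin n) (a b : ℕ) (hil : i ≠ l) :
    ⁅E k n i j a, E k n j l b⁆ = E k n i l (a + b) := by
  have h1 : E k n i j a * E k n j l b = E k n i l (a + b) := by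
    rw [E, E, E, pow_add]
    exact Matrix.single_mul_single_same (c := Polynomial.X ^ a) i j l (Polynomial.X ^ b)
  have h2 : E k n j l b * E k n i j a = 0 := by
    rw [E, E]
    exact Matrix.single_mul_single_of_ne (c := Polynomial.X ^ b) j l i hil.symm (Polynomial.X ^ a)
  rw [Ring.lie_def, h1, h2, sub_zero]

lemma abs_between (a b c : ℤ) (h : a ≤ b ∧ b ≤ c ∨ c ≤ b ∧ b ≤ a) :
    |a - b| + |b - c| = |a - c| := by
  rcases abs_cases (a - b) with h1 | h1 <;> rcases abs_cases (b - c) with h2 | h2 <;>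
    rcases abs_cases (a - c) with h3 | h3 <;> omega

lemma stdBasisMatrix_sum {ι : Type} (t : Finset ι) (i j : Fin n) (f : ι → Polynomial k) :
    Matrix.single i j (∑ r ∈ t, f r) = ∑ r ∈ t, Matrix.single i j (f r) := by
  classical
  induction t using Finset.induction with
  | empty => simp
  | insert a t h ih => rw [Finset.sum_insert h, Finset.sum_insert h, Matrix.single_add, ih]

variable (s : Fin n → Fin n → ℕ)
/-- The generating set. -/
def genSet : Set (Matrix (Fin n) (Fin n) (Polynomial k)) :=
  {A | ∃ (i : Fin n) (r : ℕ), A = E k n i i r} ∪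
  {A | ∃ (i j : Fin n) (r : ℕ), (j : ℕ) = (i : ℕ) + 1 ∧ s i j ≤ r ∧ A = E k n i j r} ∪
  {A | ∃ (i j : Fin n) (r : ℕ), (i : ℕ) = (j : ℕ) + 1 ∧ s i j ≤ r ∧ A = E k n i j r}

variable (hσ : ∀ i j l : Fin n,
      |(i : ℤ) - (j : ℤ)| + |(j : ℤ) - (l : ℤ)| = |(i : ℤ) - (l : ℤ)| →
      s i j + s j l = s i l)

include hσ

lemma s_diag (i : Fin n) : s i i = 0 := by
  have := hσ i i i (by simp)
  omega

lemma s_triangle (i l j : Fin n) : s i j ≤ s i l + s l j := by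
  rcases le_total (l : ℕ) (i : ℕ) with h1 | h1 <;>
    rcases le_total (l : ℕ) (j : ℕ) with h2 | h2 <;>
    rcases le_total (i : ℕ) (j : ℕ) with h3 | h3 <;>
    first
      | (have := hσ i l j (abs_between _ _ _ (by omega)); omega)
      | (have := hσ i j l (abs_between _ _ _ (by omega)); omega)
      | (have := hσ l i j (abs_between _ _ _ (by omega)); omega)


lemma E_mem_span (d : ℕ) : ∀ (i j : Fin n),
    ((j : ℕ) = (i : ℕ) + d ∨ (i : ℕ) = (j : ℕ) + d) → ∀ r, s i j ≤ r →
    E k n i j r ∈ LieSubalgebra.lieSpan k (Matrix (Fin n) (Fin n) (Polynomial k)) (genSet k n s) := by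
  induction d with
  | zero =>
    intro i j hij r _
    have : i = j := Fin.ext (by omega)
    subst this
    exact LieSubalgebra.subset_lieSpan (Or.inl (Or.inl ⟨i, r, rfl⟩))
  | succ d ih =>
    intro i j hij r hr
    rcases hij with hij | hij
    · -- j strictly above i : j = i + (d+1)
      have hjlt : (j : ℕ) < n := j.isLt
      have hi : (i : ℕ) + 1 < n := by omega
      set m : Fin n := ⟨(i : ℕ) + 1, hi⟩ with hm
      have hmv : (m : ℕ) = (i : ℕ) + 1 := rfl
      have hs : s i m + s m j = s i j := hσ i m j (abs_between _ _ _ (by omega))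
      have hne : i ≠ j := fun h => by subst h; omega
      have step := lie_E k n i m j (s i m) (r - s i m) hne
      rw [show s i m + (r - s i m) = r from by omega] at step
      rw [← step]
      refine (LieSubalgebra.lieSpan k _ (genSet k n s)).lie_mem ?_ ?_
      · exact LieSubalgebra.subset_lieSpan (Or.inl (Or.inr ⟨i, m, s i m, hmv, le_refl _, rfl⟩))
      · exact ih m j (Or.inl (by omega)) (r - s i m) (by omega)
    · -- i strictly below j : i = j + (d+1)
      have hilt : (i : ℕ) < n := i.isLt
      have hj : (j : ℕ) + 1 < n := by omega
      set m : Fin n := ⟨(j : ℕ) + 1, hj⟩ with hm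
      have hmv : (m : ℕ) = (j : ℕ) + 1 := rfl
      have hs : s i m + s m j = s i j := hσ i m j (abs_between _ _ _ (by omega))
      have hne : i ≠ j := fun h => by subst h; omega
      have step := lie_E k n i m j (r - s m j) (s m j) hne
      rw [show r - s m j + s m j = r from by omega] at step
      rw [← step]
      refine (LieSubalgebra.lieSpan k _ (genSet k n s)).lie_mem ?_ ?_
      · exact ih i m (Or.inr (by omega)) (r - s m j) (by omega)
      · exact LieSubalgebra.subset_lieSpan (Or.inr ⟨m, j, s m j, hmv, le_refl _, rfl⟩)

end Aux

/-- Given a shift matrix `σ = (s_{i,j})`, the subspace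
`g_σ = {A ∈ gl_n(k[t]) : t^{s_{i,j}} ∣ A_{i,j} for all i,j}` is a Lie subalgebra of
`gl_n(k[t])`, and it is generated as a Lie algebra by the elements `e_{i,i}t^r` (all `r`),
`e_{i,i+1}t^r` (`r ≥ s_{i,i+1}`) and `e_{i+1,i}t^r` (`r ≥ s_{i+1,i}`). -/
theorem shifted_current_algebra_is_lie_subalgebra_with_generators
    (k : Type) [Field k] (n : ℕ) (s : Fin n → Fin n → ℕ)
    (hσ : ∀ i j l : Fin n,
      |(i : ℤ) - (j : ℤ)| + |(j : ℤ) - (l : ℤ)| = |(i : ℤ) - (l : ℤ)| →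
      s i j + s j l = s i l) :
    ∃ L : LieSubalgebra k (Matrix (Fin n) (Fin n) (Polynomial k)),
      (L : Set (Matrix (Fin n) (Fin n) (Polynomial k))) =
        {A | ∀ i j : Fin n, (Polynomial.X : Polynomial k) ^ s i j ∣ A i j} ∧
      LieSubalgebra.lieSpan k (Matrix (Fin n) (Fin n) (Polynomial k))
        ({A | ∃ (i : Fin n) (r : ℕ), A = E k n i i r} ∪
         {A | ∃ (i j : Fin n) (r : ℕ), (j : ℕ) = (i : ℕ) + 1 ∧ s i j ≤ r ∧ A = E k n i j r} ∪
         {A | ∃ (i j : Fin n) (r : ℕ), (i : ℕ) = (j : ℕ) + 1 ∧ s i j ≤ r ∧ A = E k n i j r})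
        = L := by
  classical
  refine ⟨{ carrier := {A | ∀ i j : Fin n, (Polynomial.X : Polynomial k) ^ s i j ∣ A i j}
            add_mem' := fun {a b} ha hb i j => by
              rw [Matrix.add_apply]; exact dvd_add (ha i j) (hb i j)
            zero_mem' := fun i j => by simp
            smul_mem' := fun c A hA i j => by
              rw [Matrix.smul_apply, Polynomial.smul_eq_C_mul]
              exact (hA i j).mul_left _
            lie_mem' := fun {x y} hx hy i j => by
              rw [Ring.lie_def, Matrix.sub_apply, Matrix.mul_apply, Matrix.mul_apply]
              refine dvd_sub (Finset.dvd_sum fun l _ => ?_) (Finset.dvd_sum fun l _ => ?_)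
              · exact (pow_dvd_pow _ (s_triangle n s hσ i l j)).trans
                  (by rw [pow_add]; exact mul_dvd_mul (hx i l) (hy l j))
              · exact (pow_dvd_pow _ (s_triangle n s hσ i l j)).trans
                  (by rw [pow_add]; exact mul_dvd_mul (hy i l) (hx l j)) },
          rfl, ?_⟩
  apply le_antisymm
  · rw [LieSubalgebra.lieSpan_le]
    rintro A ((⟨i, r, rfl⟩ | ⟨i, j, r, hij, hr, rfl⟩) | ⟨i, j, r, hij, hr, rfl⟩) <;> intro a b
    · by_cases h : i = a ∧ i = b
      · obtain ⟨rfl, rfl⟩ := h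
        rw [E, Matrix.single_apply_same, s_diag n s hσ, pow_zero]
        exact one_dvd _
      · rw [E, Matrix.single_apply_of_ne _ _ _ _ _ h]
        exact dvd_zero _
    · by_cases h : i = a ∧ j = b
      · obtain ⟨rfl, rfl⟩ := h
        rw [E, Matrix.single_apply_same]
        exact pow_dvd_pow _ hr
      · rw [E, Matrix.single_apply_of_ne _ _ _ _ _ h]
        exact dvd_zero _
    · by_cases h : i = a ∧ j = b
      · obtain ⟨rfl, rfl⟩ := h
        rw [E, Matrix.single_apply_same]
        exact pow_dvd_pow _ hr
      · rw [E, Matrix.single_apply_of_ne _ _ _ _ _ h]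
        exact dvd_zero _
  · intro A hA
    have hA' : ∀ i j : Fin n, (Polynomial.X : Polynomial k) ^ s i j ∣ A i j := hA
    have entry : ∀ (i j : Fin n) (p : Polynomial k),
        (Polynomial.X : Polynomial k) ^ s i j ∣ p →
        Matrix.single i j p ∈ LieSubalgebra.lieSpan k
          (Matrix (Fin n) (Fin n) (Polynomial k))
          ({A | ∃ (i : Fin n) (r : ℕ), A = E k n i i r} ∪
           {A | ∃ (i j : Fin n) (r : ℕ), (j : ℕ) = (i : ℕ) + 1 ∧ s i j ≤ r ∧ A = E k n i j r} ∪
           {A | ∃ (i j : Fin n) (r : ℕ), (i : ℕ) = (j : ℕ) + 1 ∧ s i j ≤ r ∧ A = E k n i j r}) := by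
      intro i j p hp
      have hrep : Matrix.single i j p = ∑ r ∈ p.support,
          Matrix.single i j (Polynomial.C (p.coeff r) * Polynomial.X ^ r) := by
        conv_lhs => rw [p.as_sum_support_C_mul_X_pow]
        rw [stdBasisMatrix_sum]
      rw [hrep]
      refine sum_mem fun r hrs => ?_
      have hcoeff : p.coeff r ≠ 0 := Polynomial.mem_support_iff.mp hrs
      have hsle : s i j ≤ r := by
        by_contra hlt
        exact hcoeff (Polynomial.X_pow_dvd_iff.mp hp r (by omega))
      rw [← Polynomial.smul_eq_C_mul, ← Matrix.smul_single]
      refine Submodule.smul_mem _ _ ?_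
      rcases le_total (i : ℕ) (j : ℕ) with h | h
      · exact E_mem_span k n s hσ ((j : ℕ) - (i : ℕ)) i j (Or.inl (by omega)) r hsle
      · exact E_mem_span k n s hσ ((i : ℕ) - (j : ℕ)) i j (Or.inr (by omega)) r hsle
    rw [show A = ∑ i : Fin n, ∑ j : Fin n, Matrix.single i j (A i j) from
      Matrix.matrix_eq_sum_single A]
    exact sum_mem fun i _ => sum_mem fun j _ => entry i j (A i j) (hA' i j)

end CurrentAlgebraPaper
end

section
/- (Series of type II, top coefficient.) Let (d_r)_{r≥0} be natural numbers with d_0 = 0, and for μ ∈ ℕ^n set d_μ := d_{μ_1}+⋯+d_{μ_n}. Call an integer r > 1 optimal if d_μ < d_r for every μ ∈ ℕ^n such that either |μ| < r, or |μ| = r and μ has more than one nonzero part. Suppose given pairwise commuting elements X_i^{(r)} ∈ F_{d_r} A for 1 ≤ i ≤ n and r ≥ 1, and set X_i^{(0)} := 1. Let X_II^{(r)} be the u^{−r}-coefficient of the ordered product ∏_{i=1}^{n} (Σ_{s≥0} X_i^{(s)} (u−(i−1))^{−s}). Then X_II^{(1)} = X_1^{(1)} + ⋯ + X_n^{(1)}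 ∈ F_{d_1} A; and if r > 1 is optimal, then X_II^{(r)} ∈ F_{d_r} A and X_II^{(r)} − (X_1^{(r)} + ⋯ + X_n^{(r)}) ∈ F_{d_r − 1} A. -/
/-- Given the coefficient sequence `a` of a series `f(u) = Σ_s a_s u^{-s}`, this is the series
`f(u - c) = Σ_t (Σ_{s ≤ t} C(t-1, t-s) c^{t-s} a_s) u^{-t}`, as a power series in `u⁻¹`. -/
noncomputable def shiftSer (A : Type) [Ring A] (c : ℕ) (a : ℕ → A) : PowerSeries A :=
  PowerSeries.mk fun t =>
    ∑ s ∈ Finset.range (t + 1), (Nat.choose (t - 1) (t - s) * c ^ (t - s)) • a s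

lemma aux_listProd_mem {k A : Type} [Field k] [Ring A] [Algebra k A]
    (F : ℕ → Submodule k A) (hone : (1 : A) ∈ F 0)
    (hmul : ∀ r s : ℕ, ∀ x y : A, x ∈ F r → y ∈ F s → x * y ∈ F (r + s))
    {ι : Type*} : ∀ (L : List ι) (g : ι → A) (w : ι → ℕ),
    (∀ i ∈ L, g i ∈ F (w i)) → (L.map g).prod ∈ F ((L.map w).sum)
  | [], g, w, _ => by simpa using hone
  | i :: L, g, w, h => by
      simp only [List.map_cons, List.prod_cons, List.sum_cons]
      exact hmul _ _ _ _ (h i (by simp))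
        (aux_listProd_mem F hone hmul L g w fun j hj => h j (by simp [hj]))

lemma aux_listProd_single {M : Type} [Monoid M] {ι : Type*} :
    ∀ (L : List ι) (f : ι → M) (i0 : ι), L.Nodup → i0 ∈ L →
    (∀ j ∈ L, j ≠ i0 → f j = 1) → (L.map f).prod = f i0
  | [], _, _, _, h, _ => absurd h List.not_mem_nil
  | a :: L, f, i0, hnd, hmem, h1 => by
      rcases List.nodup_cons.mp hnd with ⟨ha, hnd'⟩
      by_cases hai : a = i0
      · subst hai
        have : ∀ x ∈ L.map f, x = 1 := by
          rintro x hx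
          rcases List.mem_map.mp hx with ⟨j, hj, rfl⟩
          exact h1 j (by simp [hj]) (fun hji => ha (hji ▸ hj))
        simp [List.prod_eq_one this]
      · have hi0L : i0 ∈ L := by
          rcases List.mem_cons.mp hmem with hh | hh
          · exact absurd hh.symm hai
          · exact hh
        have : f a = 1 := h1 a (by simp) hai
        simp only [List.map_cons, List.prod_cons, this, one_mul]
        exact aux_listProd_single L f i0 hnd' hi0L fun j hj hji => h1 j (by simp [hj]) hji

lemma aux_coeff_listProd {A : Type} [Ring A] :
    ∀ L : List (PowerSeries A), (∀ f ∈ L, PowerSeries.constantCoeff (R := A) f = 1) →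
    PowerSeries.constantCoeff (R := A) L.prod = 1 ∧
    PowerSeries.coeff (R := A) 1 L.prod = (L.map (PowerSeries.coeff (R := A) 1)).sum
  | [], _ => by simp
  | f :: L, h => by
      obtain ⟨h0, h1⟩ := aux_coeff_listProd L fun g hg => h g (by simp [hg])
      have hf0 : PowerSeries.constantCoeff (R := A) f = 1 := h f (by simp)
      constructor
      · simp [map_mul, h0, hf0]
      · rw [List.prod_cons, PowerSeries.coeff_mul]
        rw [Finset.Nat.sum_antidiagonal_eq_sum_range_succ_mk]
        simp only [List.map_cons, List.sum_cons]
        rw [Finset.sum_range_succ, Finset.sum_range_succ, Finset.sum_range_zero]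
        simp only [zero_add, Nat.sub_zero, Nat.sub_self]
        rw [PowerSeries.coeff_zero_eq_constantCoeff_apply,
          PowerSeries.coeff_zero_eq_constantCoeff_apply, h0, hf0, h1]
        rw [one_mul, mul_one, add_comm]

lemma aux_key (A : Type) [Ring A] (n : ℕ) (X : Fin n → ℕ → A)
    (hXcomm : ∀ (i j : Fin n) (r s : ℕ), X i r * X j s = X j s * X i r) :
    ∀ r : ℕ,
      PowerSeries.coeff (R := A) r
          (((List.finRange n).map fun i : Fin n => shiftSer A (i : ℕ) (X i)).prod)
      = ∑ l ∈ Finset.finsuppAntidiag (Finset.univ : Finset (Fin n)) r,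
          ∑ σ ∈ Fintype.piFinset (fun i => Finset.range (l i + 1)),
            (∏ i, Nat.choose (l i - 1) (l i - σ i) * (i : ℕ) ^ (l i - σ i)) •
              ((List.finRange n).map fun i => X i (σ i)).prod := by
  classical
  set S : Set A := Set.range (fun q : Fin n × ℕ => X q.1 q.2) with hS
  have hcomm : ∀ x ∈ S, ∀ y ∈ S, x * y = y * x := by
    rintro x ⟨⟨i, a⟩, rfl⟩ y ⟨⟨j, b⟩, rfl⟩
    exact hXcomm i j a b
  letI : CommRing (Subring.closure S) := Subring.closureCommRingOfComm hcomm
  let Y : Fin n → ℕ → Subring.closure S := fun i a => ⟨X i a, Subring.subset_closure ⟨(i, a), rfl⟩⟩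
  let ι : Subring.closure S →+* A := (Subring.closure S).subtype
  have hι : ∀ i a, ι (Y i a) = X i a := fun _ _ => rfl
  have hmapShift : ∀ i : Fin n,
      shiftSer A (i : ℕ) (X i) = PowerSeries.map ι (shiftSer (Subring.closure S) (i : ℕ) (Y i)) := by
    intro i
    ext t
    simp [shiftSer, PowerSeries.coeff_map, PowerSeries.coeff_mk, map_sum, map_nsmul, hι]
  intro r
  have hprodmap :
      PowerSeries.coeff (R := A) r (((List.finRange n).map fun i : Fin n => shiftSer A (i : ℕ) (X i)).prod)
      = ι (PowerSeries.coeff (R := Subring.closure S) r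
          (∏ i : Fin n, shiftSer (Subring.closure S) (i : ℕ) (Y i))) := by
    rw [Fin.prod_univ_def, ← PowerSeries.coeff_map]
    congr 1
    rw [map_list_prod, List.map_map]
    congr 1
    refine List.map_congr_left fun i _ => ?_
    simpa [Function.comp] using hmapShift i
  rw [hprodmap, PowerSeries.coeff_prod, map_sum]
  refine Finset.sum_congr rfl fun l hl => ?_
  have hc : ∀ i : Fin n, PowerSeries.coeff (R := Subring.closure S) (l i)
      (shiftSer (Subring.closure S) (i : ℕ) (Y i))
      = ∑ s ∈ Finset.range (l i + 1),
          (Nat.choose (l i - 1) (l i - s) * (i : ℕ) ^ (l i - s)) • Y i s :=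
    fun i => PowerSeries.coeff_mk _ _
  rw [Finset.prod_congr rfl fun i _ => hc i, Finset.prod_univ_sum, map_sum]
  refine Finset.sum_congr rfl fun σ hσ => ?_
  have h1 : (∏ i, (Nat.choose (l i - 1) (l i - σ i) * (i : ℕ) ^ (l i - σ i)) • Y i (σ i))
      = ((∏ i, Nat.choose (l i - 1) (l i - σ i) * (i : ℕ) ^ (l i - σ i) : ℕ) : Subring.closure S)
          * ∏ i, Y i (σ i) := by
    rw [Nat.cast_prod, ← Finset.prod_mul_distrib]
    exact Finset.prod_congr rfl fun i _ => nsmul_eq_mul _ _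
  rw [h1, map_mul, map_natCast, nsmul_eq_mul]
  congr 1
  rw [Fin.prod_univ_def, map_list_prod, List.map_map]
  rfl

/-- **series of type II, top coefficient.** With `(d_r)` as below, commuting
elements `X_i^{(r)} ∈ F_{d_r} A` (`X_i^{(0)} = 1`), and `X_II^{(r)}` the `u^{-r}`-coefficient
of `∏_{i=1}^{n} Σ_s X_i^{(s)} (u-(i-1))^{-s}`, one has
`X_II^{(1)} = X_1^{(1)} + ⋯ + X_n^{(1)} ∈ F_{d_1} A`, and for any optimal `r > 1`,
`X_II^{(r)} ∈ F_{d_r} A` and `X_II^{(r)} ≡ X_1^{(r)} + ⋯ + X_n^{(r)} mod F_{d_r - 1} A`. -/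
theorem typeII_series
    (k : Type) [Field k] (p : ℕ) [Fact p.Prime] [CharP k p]
    (A : Type) [Ring A] [Algebra k A]
    (F : ℕ → Submodule k A) (hmono : Monotone F) (hone : (1 : A) ∈ F 0)
    (hmul : ∀ r s : ℕ, ∀ x y : A, x ∈ F r → y ∈ F s → x * y ∈ F (r + s))
    (n : ℕ) (d : ℕ → ℕ) (hd0 : d 0 = 0)
    (X : Fin n → ℕ → A) (hX0 : ∀ i, X i 0 = 1)
    (hXcomm : ∀ (i j : Fin n) (r s : ℕ), X i r * X j s = X j s * X i r)
    (hXF : ∀ (i : Fin n) (r : ℕ), 1 ≤ r → X i r ∈ F (d r)) :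
    (PowerSeries.coeff (R := A) 1 (((List.finRange n).map fun i : Fin n => shiftSer A (i : ℕ) (X i)).prod)
        = ∑ i : Fin n, X i 1 ∧
      PowerSeries.coeff (R := A) 1 (((List.finRange n).map fun i : Fin n => shiftSer A (i : ℕ) (X i)).prod)
        ∈ F (d 1)) ∧
    (∀ r : ℕ, 1 < r →
      (∀ μ : Fin n → ℕ,
        ((∑ i, μ i) < r ∨
          ((∑ i, μ i) = r ∧ 1 < (Finset.univ.filter fun i => μ i ≠ 0).card)) →
        (∑ i, d (μ i)) < d r) →
      PowerSeries.coeff (R := A) r (((List.finRange n).map fun i : Fin n => shiftSer A (i : ℕ) (X i)).prod)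
        ∈ F (d r) ∧
      PowerSeries.coeff (R := A) r (((List.finRange n).map fun i : Fin n => shiftSer A (i : ℕ) (X i)).prod)
        - (∑ i : Fin n, X i r) ∈ F (d r - 1)) := by
  classical
  have key := aux_key A n X hXcomm
  have hg : ∀ σ : Fin n → ℕ,
      ((List.finRange n).map fun i => X i (σ i)).prod ∈ F (∑ i, d (σ i)) := by
    intro σ
    rw [Fin.sum_univ_def]
    refine aux_listProd_mem F hone hmul _ _ _ fun i _ => ?_
    rcases Nat.eq_zero_or_pos (σ i) with h | h
    · rw [h, hX0, hd0]; exact hone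
    · exact hXF i _ h
  constructor
  · -- part 1 : r = 1
    have hc0 : ∀ f ∈ (List.finRange n).map fun i : Fin n => shiftSer A (i : ℕ) (X i),
        PowerSeries.constantCoeff (R := A) f = 1 := by
      intro f hf
      rcases List.mem_map.mp hf with ⟨i, _, rfl⟩
      rw [← PowerSeries.coeff_zero_eq_constantCoeff_apply]
      simp [shiftSer, PowerSeries.coeff_mk, hX0]
    obtain ⟨-, h1⟩ := aux_coeff_listProd _ hc0
    have hcoeff1 : ∀ i : Fin n, PowerSeries.coeff (R := A) 1 (shiftSer A (i : ℕ) (X i)) = X i 1 := by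
      intro i
      rw [shiftSer, PowerSeries.coeff_mk, Finset.sum_range_succ, Finset.sum_range_one]
      simp
    have heq : PowerSeries.coeff (R := A) 1
        (((List.finRange n).map fun i : Fin n => shiftSer A (i : ℕ) (X i)).prod)
        = ∑ i : Fin n, X i 1 := by
      rw [h1, List.map_map, Fin.sum_univ_def]
      congr 1
      refine List.map_congr_left fun i _ => ?_
      simpa [Function.comp] using hcoeff1 i
    exact ⟨heq, heq ▸ sum_mem fun i _ => hXF i 1 le_rfl⟩
  · intro r hr hopt
    have hrpos : 0 < r := by omega
    have hdr : 0 < d r := by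
      have h := hopt (fun _ => 0) (Or.inl (by simpa using hrpos))
      simpa [hd0] using h
    have hδ : (∑ l ∈ Finset.finsuppAntidiag (Finset.univ : Finset (Fin n)) r,
        ∑ i : Fin n, if l = Finsupp.single i r then X i r else 0) = ∑ i : Fin n, X i r := by
      rw [Finset.sum_comm]
      refine Finset.sum_congr rfl fun i _ => ?_
      rw [Finset.sum_ite_eq' _ (Finsupp.single i r) fun _ => X i r, if_pos]
      rw [Finset.mem_finsuppAntidiag]
      refine ⟨?_, Finset.subset_univ _⟩
      simp [Finsupp.single_apply]
    have hmain : PowerSeries.coeff (R := A) r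
        (((List.finRange n).map fun i : Fin n => shiftSer A (i : ℕ) (X i)).prod)
        - (∑ i : Fin n, X i r) ∈ F (d r - 1) := by
      rw [key r, ← hδ, ← Finset.sum_sub_distrib]
      refine sum_mem fun l hl => ?_
      obtain ⟨hlsum, -⟩ := Finset.mem_finsuppAntidiag.mp hl
      have hlP : (⇑l : Fin n → ℕ) ∈ Fintype.piFinset fun i => Finset.range (l i + 1) := by
        simp [Fintype.mem_piFinset, Nat.lt_succ_self]
      rw [← Finset.sum_erase_add _ _ hlP, add_sub_assoc]
      refine add_mem (sum_mem fun σ hσ => ?_) ?_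
      · obtain ⟨hne, hσP⟩ := Finset.mem_erase.mp hσ
        have hle : ∀ i, σ i ≤ l i := fun i => Nat.lt_succ_iff.mp (by
          have h := Fintype.mem_piFinset.mp hσP i
          simpa using h)
        have hlt : ∑ i, σ i < r := by
          rw [← hlsum]
          refine Finset.sum_lt_sum (fun i _ => hle i) ?_
          by_contra hc
          push_neg at hc
          exact hne (funext fun i => le_antisymm (hle i) (hc i (Finset.mem_univ i)))
        have hF : (∑ i, d (σ i)) ≤ d r - 1 := Nat.le_pred_of_lt (hopt σ (Or.inl hlt))
        exact nsmul_mem (hmono hF (hg σ)) _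
      · simp only [Nat.sub_self, Nat.choose_zero_right, pow_zero, mul_one,
          Finset.prod_const_one, one_smul]
        by_cases hc2 : 1 < (Finset.univ.filter fun i => l i ≠ 0).card
        · have hδ0 : (∑ i : Fin n, if l = Finsupp.single i r then X i r else 0) = 0 := by
            refine Finset.sum_eq_zero fun i _ => ?_
            rw [if_neg]
            intro hco
            apply absurd hc2
            rw [hco]
            simp only [not_lt]
            have hfil : (Finset.univ.filter fun j => Finsupp.single i r j ≠ 0)
                = ({i} : Finset (Fin n)) := by
              ext j
              by_cases h : i = j <;>
                  simp [Finsupp.single_apply, h, eq_comm] <;> omega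
            rw [hfil]
            simp
          rw [hδ0, sub_zero]
          exact hmono (Nat.le_pred_of_lt (hopt ⇑l (Or.inr ⟨hlsum, hc2⟩))) (hg ⇑l)
        · have hex : ∃ i, l i ≠ 0 := by
            by_contra hall
            push_neg at hall
            rw [Finset.sum_congr rfl fun i _ => hall i] at hlsum
            simp at hlsum
            omega
          obtain ⟨iw, hiw⟩ := hex
          have hnem : (Finset.univ.filter fun i => l i ≠ 0).Nonempty :=
            ⟨iw, Finset.mem_filter.mpr ⟨Finset.mem_univ _, hiw⟩⟩
          have hcard1 : (Finset.univ.filter fun i => l i ≠ 0).card = 1 :=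
            le_antisymm (not_lt.mp hc2) (Finset.card_pos.mpr hnem)
          obtain ⟨i0, hi0⟩ := Finset.card_eq_one.mp hcard1
          have hzero : ∀ j, j ≠ i0 → l j = 0 := by
            intro j hj
            by_contra hz
            have hmem : j ∈ ({i0} : Finset (Fin n)) :=
              hi0 ▸ Finset.mem_filter.mpr ⟨Finset.mem_univ _, hz⟩
            exact hj (Finset.mem_singleton.mp hmem)
          have hli0 : l i0 = r := by
            rw [← hlsum]
            exact (Finset.sum_eq_single i0 (fun j _ hj => hzero j hj)
              (fun h => absurd (Finset.mem_univ i0) h)).symm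
          have hleq : l = Finsupp.single i0 r := by
            ext j
            rcases eq_or_ne j i0 with rfl | hj
            · simp [hli0, Finsupp.single_apply]
            · simp [hzero j hj, Finsupp.single_apply, Ne.symm hj]
          have hgl : (((List.finRange n).map fun i => X i (l i)).prod) = X i0 r := by
            have h := aux_listProd_single (List.finRange n) (fun i => X i (l i)) i0
              (List.nodup_finRange n) (List.mem_finRange i0)
              (fun j _ hj => by show X j (l j) = 1; rw [hzero j hj, hX0])
            rw [h]
            show X i0 (l i0) = X i0 r
            rw [hli0]
          have hcond : ∀ i : Fin n, (l = Finsupp.single i r) ↔ (i = i0) := by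
            intro i
            constructor
            · intro h
              have h2 : Finsupp.single i0 r = Finsupp.single i r := hleq ▸ h
              exact ((Finsupp.single_left_inj (by omega : r ≠ 0)).mp h2).symm
            · rintro rfl
              exact hleq
          have hδl : (∑ i : Fin n, if l = Finsupp.single i r then X i r else 0) = X i0 r := by
            calc (∑ i : Fin n, if l = Finsupp.single i r then X i r else 0)
                = ∑ i : Fin n, if i = i0 then X i r else 0 := by
                  refine Finset.sum_congr rfl fun i _ => ?_
                  simp only [hcond i]
              _ = X i0 r := by
                  rw [Finset.sum_ite_eq' Finset.univ i0 fun i => X i r,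
                    if_pos (Finset.mem_univ _)]
          rw [hgl, hδl, sub_self]
          exact zero_mem _
    refine ⟨?_, hmain⟩
    have h2 : (∑ i : Fin n, X i r) ∈ F (d r) := sum_mem fun i _ => hXF i r (by omega)
    have h3 := add_mem (hmono (Nat.sub_le _ 1) hmain) h2
    simpa using h3
end

section
/- (Series of type III, top coefficient.) Suppose given pairwise commuting elements X^{(r)} ∈ F_{r−1} A for all r ≥ 1, and set X^{(0)} := 1. Let X_III^{(r)} be the u^{−r}-coefficient of the product ∏_{i=1}^{p} (Σ_{s≥0} X^{(s)} (u−(i−1))^{−s}). Then: X_III^{(0)} = 1; X_III^{(r)} = 0 for 1 ≤ r ≤ p−1; X_III^{(p)} = (X^{(1)})^p − X^{(1)} ∈ F_0 A; if r > p and p ∣ r then X_III^{(r)} ∈ F_{r−p} A and X_III^{(r)} − ((X^{(r/p)})^p − X^{(r−p+1)}) ∈ F_{r−p−1} A; and if r > p and p ∤ r then X_III^{(r)} ∈ F_{r−p−1} A. -/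
namespace TypeIIIProof

open Finset
open PowerSeries (coeff mk C rescale invOneSubPow)

variable {k : Type} [Field k] {B : Type} [CommRing B] [Algebra k B]

/-! ### ℤ-indexed filtration -/

/-- Extension of the filtration to integer indices (`⊥` for negative ones). -/
def Fz (F : ℕ → Submodule k B) (n : ℤ) : Submodule k B := if 0 ≤ n then F n.toNat else ⊥

lemma Fz_natCast (F : ℕ → Submodule k B) (n : ℕ) : Fz F (n : ℤ) = F n := by
  simp [Fz]

lemma eq_zero_of_mem_Fz_neg (F : ℕ → Submodule k B) {n : ℤ} (h : n < 0) {x : B}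
    (hx : x ∈ Fz F n) : x = 0 := by
  rw [Fz, if_neg (by omega)] at hx
  simpa using hx

lemma Fz_mono {F : ℕ → Submodule k B} (hmono : Monotone F) : Monotone (Fz F) := by
  intro a b hab
  by_cases ha : 0 ≤ a
  · rw [Fz, if_pos ha, Fz, if_pos (by omega)]
    exact hmono (by omega)
  · rw [Fz, if_neg ha]
    exact bot_le

lemma mem_Fz_of_mem {F : ℕ → Submodule k B} (hmono : Monotone F) {x : B} {n : ℕ} {m : ℤ}
    (hx : x ∈ F n) (h : (n : ℤ) ≤ m) : x ∈ Fz F m :=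
  Fz_mono hmono h (by rw [Fz_natCast]; exact hx)

lemma Fz_mul {F : ℕ → Submodule k B}
    (hmul : ∀ r s : ℕ, ∀ x y : B, x ∈ F r → y ∈ F s → x * y ∈ F (r + s))
    {a b : ℤ} {x y : B} (hx : x ∈ Fz F a) (hy : y ∈ Fz F b) : x * y ∈ Fz F (a + b) := by
  by_cases ha : 0 ≤ a
  · by_cases hb : 0 ≤ b
    · rw [Fz, if_pos ha] at hx
      rw [Fz, if_pos hb] at hy
      have h := hmul _ _ _ _ hx hy
      rw [Fz, if_pos (by omega)]
      have : (a + b).toNat = a.toNat + b.toNat := by omega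
      rw [this]
      exact h
    · rw [Fz, if_neg hb] at hy
      rw [Submodule.mem_bot] at hy
      rw [hy, mul_zero]
      exact zero_mem _
  · rw [Fz, if_neg ha] at hx
    rw [Submodule.mem_bot] at hx
    rw [hx, zero_mul]
    exact zero_mem _

/-! ### Filtered power series -/

/-- Power series whose `t`-th coefficient lies in `F (t - d)`. -/
def W (F : ℕ → Submodule k B) (d : ℤ) : Submodule k (PowerSeries B) where
  carrier := {f | ∀ t : ℕ, coeff (R := B) t f ∈ Fz F ((t : ℤ) - d)}
  add_mem' := fun hf hg t => by rw [map_add]; exact add_mem (hf t) (hg t)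
  zero_mem' := fun t => by rw [map_zero]; exact zero_mem _
  smul_mem' := fun c f hf t => by
    have : coeff (R := B) t (c • f) = c • coeff (R := B) t f := rfl
    rw [this]
    exact Submodule.smul_mem _ _ (hf t)

lemma mem_W_iff {F : ℕ → Submodule k B} {d : ℤ} {f : PowerSeries B} :
    f ∈ W F d ↔ ∀ t : ℕ, coeff (R := B) t f ∈ Fz F ((t : ℤ) - d) := Iff.rfl

lemma W_mono {F : ℕ → Submodule k B} (hmono : Monotone F) {d e : ℤ} (h : e ≤ d) :
    W F d ≤ W F e := fun _ hf t => Fz_mono hmono (by omega) (hf t)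

lemma one_mem_W {F : ℕ → Submodule k B} (hone : (1 : B) ∈ F 0) : (1 : PowerSeries B) ∈ W F 0 := by
  intro t
  rw [PowerSeries.coeff_one]
  split_ifs with h
  · subst h
    simpa [Fz] using hone
  · exact zero_mem _

lemma W_mul {F : ℕ → Submodule k B}
    (hmul : ∀ r s : ℕ, ∀ x y : B, x ∈ F r → y ∈ F s → x * y ∈ F (r + s))
    {d e : ℤ} {f g : PowerSeries B} (hf : f ∈ W F d) (hg : g ∈ W F e) :
    f * g ∈ W F (d + e) := by
  intro t
  rw [PowerSeries.coeff_mul]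
  refine Submodule.sum_mem _ fun ab hab => ?_
  have habs : ab.1 + ab.2 = t := Finset.HasAntidiagonal.mem_antidiagonal.mp hab
  have h := Fz_mul hmul (hf ab.1) (hg ab.2)
  have harith : ((ab.1 : ℤ) - d) + ((ab.2 : ℤ) - e) = (t : ℤ) - (d + e) := by
    have : (ab.1 : ℤ) + (ab.2 : ℤ) = (t : ℤ) := by exact_mod_cast habs
    omega
  rwa [harith] at h

lemma W_pow {F : ℕ → Submodule k B} (hone : (1 : B) ∈ F 0)
    (hmul : ∀ r s : ℕ, ∀ x y : B, x ∈ F r → y ∈ F s → x * y ∈ F (r + s))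
    {d : ℤ} {f : PowerSeries B} (hf : f ∈ W F d) (j : ℕ) : f ^ j ∈ W F (j * d) := by
  induction j with
  | zero => simpa using one_mem_W hone
  | succ n ih =>
      have := W_mul hmul ih hf
      rw [pow_succ]
      have harith : (n : ℤ) * d + d = ((n + 1 : ℕ) : ℤ) * d := by push_cast; ring
      rwa [harith] at this

lemma W_prod_range {F : ℕ → Submodule k B} (hone : (1 : B) ∈ F 0)
    (hmul : ∀ r s : ℕ, ∀ x y : B, x ∈ F r → y ∈ F s → x * y ∈ F (r + s))
    {f : ℕ → PowerSeries B} (hf : ∀ i, f i ∈ W F 1) (n : ℕ) :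
    (∏ i ∈ range n, f i) ∈ W F (n : ℤ) := by
  induction n with
  | zero => simpa using one_mem_W hone
  | succ n ih =>
      rw [prod_range_succ]
      have := W_mul hmul ih (hf n)
      have harith : ((n : ℤ) + 1) = ((n + 1 : ℕ) : ℤ) := by push_cast; ring
      rwa [harith] at this


/-! ### Numeric facts mod p -/

section Numeric

variable (p : ℕ) [hp : Fact p.Prime] [CharP k p]

/-- `∑_{c < p} c ^ e`. -/
def Sn (e : ℕ) : ℕ := ∑ c ∈ range p, c ^ e

lemma Sn_cast (e : ℕ) :
    ((Sn p e : ℕ) : k) = if e = 0 then 0 else if (p - 1) ∣ e then -1 else 0 := by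
  haveI : NeZero p := ⟨hp.out.ne_zero⟩
  have hψ : ∀ n : ℕ, ((n : ℕ) : k) = ZMod.castHom dvd_rfl k ((n : ℕ) : ZMod p) := fun n =>
    (map_natCast (ZMod.castHom dvd_rfl k) n).symm
  rw [hψ]
  have h2 : ((Sn p e : ℕ) : ZMod p) = ∑ x : ZMod p, x ^ e := by
    rw [Sn]
    push_cast
    refine Finset.sum_nbij' (fun c => ((c : ℕ) : ZMod p)) (fun x => x.val) ?_ ?_ ?_ ?_ ?_
    · intro a _; exact mem_univ _
    · intro x _
      simp only [mem_range]
      exact ZMod.val_lt x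
    · intro a ha
      exact ZMod.val_cast_of_lt (mem_range.mp ha)
    · intro x _
      exact ZMod.natCast_rightInverse x
    · intro a _; rfl
  rw [h2]
  by_cases he : e = 0
  · subst he
    simp only [pow_zero, if_pos rfl]
    rw [Finset.sum_const, card_univ, ZMod.card, nsmul_eq_mul, mul_one, ZMod.natCast_self]
    exact map_zero _
  · rw [if_neg he]
    classical
    rw [Finset.sum_eq_sum_sdiff_singleton_add (mem_univ (0 : ZMod p)), zero_pow he, add_zero]
    have hmap : (univ : Finset (ZMod p)ˣ).map ⟨(Units.val : (ZMod p)ˣ → ZMod p), Units.val_injective⟩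
        = univ \ {0} := by
      ext x
      simp only [mem_map, mem_univ, Function.Embedding.coeFn_mk, true_and, mem_sdiff,
        mem_singleton]
      constructor
      · rintro ⟨u, rfl⟩
        exact u.ne_zero
      · intro hx
        exact ⟨(IsUnit.mk0 x hx).unit, rfl⟩
    have : ∑ x ∈ univ \ {0}, x ^ e = ∑ u : (ZMod p)ˣ, ((u : ZMod p)) ^ e := by
      rw [← hmap, Finset.sum_map]
      rfl
    rw [this]
    rw [FiniteField.sum_pow_units, ZMod.card]
    split_ifs with h
    · rw [map_neg, map_one]
    · exact map_zero _

lemma lucas_one {r : ℕ} (hpr : p ∣ r) (hr : p ≤ r) :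
    (((r - 1).choose (p - 1) : ℕ) : k) = 1 := by
  haveI : NeZero p := ⟨hp.out.ne_zero⟩
  have hψ : ∀ n : ℕ, ((n : ℕ) : k) = ZMod.castHom dvd_rfl k ((n : ℕ) : ZMod p) := fun n =>
    (map_natCast (ZMod.castHom dvd_rfl k) n).symm
  rw [hψ]
  suffices h : (((r - 1).choose (p - 1) : ℕ) : ZMod p) = 1 by rw [h, map_one]
  have lucas := (ZMod.intCast_eq_intCast_iff _ _ _).mpr
    (Choose.choose_modEq_choose_mod_mul_choose_div (n := r - 1) (k := p - 1) (p := p))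
  push_cast at lucas
  rw [lucas]
  obtain ⟨m, rfl⟩ := hpr
  have hp2 := hp.out.two_le
  have hm0 : m ≠ 0 := by rintro rfl; simp at hr; omega
  obtain ⟨m', rfl⟩ : ∃ m', m = m' + 1 := ⟨m - 1, by omega⟩
  have hr1 : p * (m' + 1) - 1 = p * m' + (p - 1) := by
    have : p * (m' + 1) = p * m' + p := by ring
    omega
  have hmod : (p * (m' + 1) - 1) % p = p - 1 := by
    rw [hr1, Nat.mul_add_mod, Nat.mod_eq_of_lt (by omega)]
  have hdivv : (p * (m' + 1) - 1) / p = m' := by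
    rw [hr1, Nat.mul_add_div (by omega), Nat.div_eq_of_lt (by omega), add_zero]
  have hpm : (p - 1) % p = p - 1 := Nat.mod_eq_of_lt (by omega)
  have hpd : (p - 1) / p = 0 := Nat.div_eq_of_lt (by omega)
  rw [hmod, hdivv, hpm, hpd, Nat.choose_self, Nat.choose_zero_right]
  norm_num

lemma lucas_zero {r : ℕ} (hpr : ¬ p ∣ r) :
    (((r - 1).choose (p - 1) : ℕ) : k) = 0 := by
  haveI : NeZero p := ⟨hp.out.ne_zero⟩
  have hψ : ∀ n : ℕ, ((n : ℕ) : k) = ZMod.castHom dvd_rfl k ((n : ℕ) : ZMod p) := fun n =>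
    (map_natCast (ZMod.castHom dvd_rfl k) n).symm
  rw [hψ]
  suffices h : (((r - 1).choose (p - 1) : ℕ) : ZMod p) = 0 by rw [h, map_zero]
  have lucas := (ZMod.intCast_eq_intCast_iff _ _ _).mpr
    (Choose.choose_modEq_choose_mod_mul_choose_div (n := r - 1) (k := p - 1) (p := p))
  push_cast at lucas
  rw [lucas]
  have hp2 := hp.out.two_le
  have hr1 : 1 ≤ r := by
    rcases Nat.eq_zero_or_pos r with rfl | h
    · exact absurd (dvd_zero p) hpr
    · exact h
  have hc1 : 1 ≤ r % p := by
    have := Nat.mod_lt r (show 0 < p by omega)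
    rcases Nat.eq_zero_or_pos (r % p) with h0 | h
    · exact absurd (Nat.dvd_of_mod_eq_zero h0) hpr
    · exact h
  have hclt : r % p < p := Nat.mod_lt r (by omega)
  have hdm := Nat.div_add_mod r p
  have hr2 : r - 1 = p * (r / p) + (r % p - 1) := by omega
  have hmod : (r - 1) % p = r % p - 1 := by
    rw [hr2, Nat.mul_add_mod, Nat.mod_eq_of_lt (by omega)]
  have hpm : (p - 1) % p = p - 1 := Nat.mod_eq_of_lt (by omega)
  rw [hmod, hpm, Nat.choose_eq_zero_of_lt (by omega)]
  push_cast
  ring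

end Numeric


/-! ### The shift substitution `f(u) ↦ f(u-c)` as a ring homomorphism -/

lemma invOneSubPow_pow (s : ℕ) :
    invOneSubPow B 1 ^ s = invOneSubPow B s := by
  apply inv_injective
  rw [← inv_pow]
  apply Units.ext
  rw [Units.val_pow_eq_pow_val]
  show ((invOneSubPow B 1).inv) ^ s = (invOneSubPow B s).inv
  rw [PowerSeries.invOneSubPow_inv_eq_one_sub_pow, PowerSeries.invOneSubPow_inv_eq_one_sub_pow,
    pow_one]

/-- The series `(u - c)⁻¹ = Σ_t c^(t-1) u^(-t)`, as a series in `u⁻¹`. -/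
noncomputable def Xc (c : ℕ) : PowerSeries B := mk fun t => if t = 0 then 0 else (c : B) ^ (t - 1)

/-- The shift kernel: the `u^{-t}`-coefficient of `(u-c)^{-s}`. -/
def nK (c t s : ℕ) : ℕ := (t - 1).choose (t - s) * c ^ (t - s)

lemma Xc_eq (c : ℕ) : (Xc c : PowerSeries B)
    = rescale (c : B) (invOneSubPow B 1).val * PowerSeries.X := by
  ext n
  rw [← pow_one (PowerSeries.X (R := B)), PowerSeries.coeff_mul_X_pow']
  simp only [Xc, PowerSeries.coeff_mk, PowerSeries.coeff_rescale,
    PowerSeries.invOneSubPow_val_eq_mk_sub_one_add_choose_of_pos B 1 one_pos]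
  rcases Nat.eq_zero_or_pos n with rfl | hn
  · simp
  · rw [if_neg (by omega), if_pos (by omega)]
    simp

lemma coeff_Xc_pow (c s t : ℕ) :
    coeff (R := B) t ((Xc c : PowerSeries B) ^ s) = if s ≤ t then ((nK c t s : ℕ) : B) else 0 := by
  rcases Nat.eq_zero_or_pos s with rfl | hs
  · rw [pow_zero, PowerSeries.coeff_one, if_pos (Nat.zero_le t)]
    rcases Nat.eq_zero_or_pos t with rfl | ht
    · simp [nK]
    · rw [if_neg (by omega)]
      have h0 : nK c t 0 = 0 := by
        rw [nK, Nat.sub_zero, Nat.choose_eq_zero_of_lt (by omega), zero_mul]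
      rw [h0, Nat.cast_zero]
  · rw [Xc_eq, mul_pow, ← map_pow,
      show ((invOneSubPow B 1).val) ^ s = ((invOneSubPow B 1) ^ s).val from
        (Units.val_pow_eq_pow_val _ _).symm,
      invOneSubPow_pow, PowerSeries.coeff_mul_X_pow']
    split_ifs with h
    · rw [PowerSeries.coeff_rescale,
        PowerSeries.invOneSubPow_val_eq_mk_sub_one_add_choose_of_pos B s hs,
        PowerSeries.coeff_mk]
      have h1 : s - 1 + (t - s) = t - 1 := by omega
      have h2 : (t - 1).choose (s - 1) = (t - 1).choose (t - s) := by
        rw [← Nat.choose_symm (show s - 1 ≤ t - 1 by omega)]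
        congr 1
        omega
      rw [h1, h2, nK]
      push_cast
      ring
    · rfl

/-- The shift operator on coefficients. -/
noncomputable def shiftFun (c : ℕ) (f : PowerSeries B) : PowerSeries B :=
  mk fun t => ∑ s ∈ range (t + 1), nK c t s • coeff (R := B) s f

lemma coeff_shiftFun (c : ℕ) (f : PowerSeries B) (t : ℕ) :
    coeff (R := B) t (shiftFun c f) = ∑ s ∈ range (t + 1), nK c t s • coeff (R := B) s f :=
  PowerSeries.coeff_mk _ _

lemma coeff_shiftFun_eq (c : ℕ) (f : PowerSeries B) {t T : ℕ} (h : t ≤ T) :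
    coeff (R := B) t (shiftFun c f)
      = coeff (R := B) t (∑ s ∈ range (T + 1), C (R := B) (coeff (R := B) s f) * (Xc c) ^ s) := by
  rw [map_sum, coeff_shiftFun]
  have key : ∀ s, coeff (R := B) t (C (R := B) (coeff (R := B) s f) * (Xc c) ^ s)
      = if s ≤ t then coeff (R := B) s f * ((nK c t s : ℕ) : B) else 0 := by
    intro s
    rw [PowerSeries.coeff_C_mul, coeff_Xc_pow]
    split_ifs with hst
    · rfl
    · exact mul_zero _
  simp_rw [key]
  rw [← Finset.sum_filter]
  have hfil : (range (T + 1)).filter (fun s => s ≤ t) = range (t + 1) := by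
    ext x
    simp only [mem_filter, mem_range]
    omega
  rw [hfil]
  refine Finset.sum_congr rfl fun s hs => ?_
  rw [nsmul_eq_mul, mul_comm]

lemma shiftFun_mul (c : ℕ) (f g : PowerSeries B) :
    shiftFun c (f * g) = shiftFun c f * shiftFun c g := by
  ext t
  have hR : coeff (R := B) t (shiftFun c f * shiftFun c g)
      = ∑ s1 ∈ range (t + 1), ∑ s2 ∈ range (t + 1),
          coeff (R := B) s1 f * coeff (R := B) s2 g * coeff (R := B) t ((Xc c : PowerSeries B) ^ (s1 + s2)) := by
    rw [PowerSeries.coeff_mul]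
    have hrw : ∀ ab ∈ antidiagonal t,
        coeff (R := B) ab.1 (shiftFun c f) * coeff (R := B) ab.2 (shiftFun c g)
          = coeff (R := B) ab.1 (∑ s ∈ range (t + 1), C (R := B) (coeff (R := B) s f) * (Xc c) ^ s)
            * coeff (R := B) ab.2 (∑ s ∈ range (t + 1), C (R := B) (coeff (R := B) s g) * (Xc c) ^ s) := by
      intro ab hab
      have hm := mem_antidiagonal.mp hab
      rw [coeff_shiftFun_eq c f (show ab.1 ≤ t by omega),
          coeff_shiftFun_eq c g (show ab.2 ≤ t by omega)]
    rw [Finset.sum_congr rfl hrw, ← PowerSeries.coeff_mul, Finset.sum_mul_sum]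
    have hmm : ∀ s1 s2 : ℕ,
        (C (R := B) (coeff (R := B) s1 f) * (Xc c) ^ s1) * (C (R := B) (coeff (R := B) s2 g) * (Xc c) ^ s2)
          = C (R := B) (coeff (R := B) s1 f * coeff (R := B) s2 g) * (Xc c) ^ (s1 + s2) := by
      intro s1 s2
      rw [map_mul, pow_add]
      ring
    simp_rw [hmm]
    rw [map_sum]
    simp_rw [map_sum, PowerSeries.coeff_C_mul]
  have hL : coeff (R := B) t (shiftFun c (f * g))
      = ∑ s ∈ range (t + 1), ∑ ab ∈ antidiagonal s,
          coeff (R := B) ab.1 f * coeff (R := B) ab.2 g * coeff (R := B) t ((Xc c : PowerSeries B) ^ (ab.1 + ab.2)) := by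
    rw [coeff_shiftFun_eq c (f * g) (le_refl t), map_sum]
    simp_rw [PowerSeries.coeff_C_mul, PowerSeries.coeff_mul, Finset.sum_mul]
    refine Finset.sum_congr rfl fun s hs => Finset.sum_congr rfl fun ab hab => ?_
    rw [← mem_antidiagonal.mp hab]
  rw [hL, hR]
  have hdisj : (↑(range (t + 1)) : Set ℕ).PairwiseDisjoint antidiagonal := by
    intro a _ b _ hab
    simp only [Function.onFun]
    rw [Finset.disjoint_left]
    intro x hx hx'
    exact hab ((mem_antidiagonal.mp hx).symm.trans (mem_antidiagonal.mp hx'))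
  rw [← Finset.sum_biUnion hdisj]
  rw [← Finset.sum_product']
  refine Finset.sum_subset ?_ ?_
  · intro x hx
    rw [Finset.mem_biUnion] at hx
    obtain ⟨a, ha, hx⟩ := hx
    have h1 := mem_antidiagonal.mp hx
    have h2 := mem_range.mp ha
    rw [Finset.mem_product, mem_range, mem_range]
    omega
  · intro x hx1 hx2
    have hgt : t < x.1 + x.2 := by
      by_contra hle
      push_neg at hle
      exact hx2 (Finset.mem_biUnion.mpr ⟨x.1 + x.2, mem_range.mpr (by omega),
        mem_antidiagonal.mpr rfl⟩)
    rw [coeff_Xc_pow, if_neg (by omega), mul_zero]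

/-- The substitution `f(u) ↦ f(u - c)` as a ring homomorphism. -/
noncomputable def shiftHom (c : ℕ) : PowerSeries B →+* PowerSeries B where
  toFun := shiftFun c
  map_one' := by
    ext t
    rw [coeff_shiftFun]
    have key : ∀ s ∈ range (t + 1), nK c t s • coeff (R := B) s (1 : PowerSeries B)
        = if s = 0 then ((nK c t 0 : ℕ) : B) else 0 := by
      intro s _
      rw [PowerSeries.coeff_one]
      split_ifs with h
      · subst h
        rw [nsmul_eq_mul, mul_one]
      · rw [smul_zero]
    rw [Finset.sum_congr rfl key]
    rw [Finset.sum_ite_eq' (range (t + 1)) 0 (fun _ => ((nK c t 0 : ℕ) : B))]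
    rw [if_pos (mem_range.mpr (by omega)), PowerSeries.coeff_one]
    rcases Nat.eq_zero_or_pos t with rfl | ht
    · simp [nK]
    · rw [if_neg (by omega)]
      have h0 : nK c t 0 = 0 := by
        rw [nK, Nat.sub_zero, Nat.choose_eq_zero_of_lt (by omega), zero_mul]
      rw [h0, Nat.cast_zero]
  map_mul' := shiftFun_mul c
  map_zero' := by
    ext t
    rw [coeff_shiftFun]
    simp
  map_add' := by
    intro f g
    ext t
    rw [coeff_shiftFun, map_add, coeff_shiftFun, coeff_shiftFun, ← Finset.sum_add_distrib]
    refine Finset.sum_congr rfl fun s _ => ?_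
    rw [map_add, smul_add]

lemma coeff_shiftHom (c : ℕ) (f : PowerSeries B) (t : ℕ) :
    coeff (R := B) t (shiftHom c f) = ∑ s ∈ range (t + 1), nK c t s • coeff (R := B) s f :=
  coeff_shiftFun c f t


/-! ### The series h₀ and its shifts -/

section Series

variable (p : ℕ) [hp : Fact p.Prime] [CharP k p]
variable {F : ℕ → Submodule k B} {Y : ℕ → B}

/-- `h₀ = Σ_{s ≥ 1} Y_s u^{-s}`. -/
noncomputable def h0 (Y : ℕ → B) : PowerSeries B := mk fun s => if s = 0 then 0 else Y s

lemma coeff_h0 (Y : ℕ → B) (s : ℕ) :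
    coeff (R := B) s (h0 Y) = if s = 0 then 0 else Y s := PowerSeries.coeff_mk _ _

lemma h0_mem (hmono : Monotone F) (hYF : ∀ r, 1 ≤ r → Y r ∈ F (r - 1)) :
    h0 Y ∈ W F 1 := by
  intro t
  rw [coeff_h0]
  split_ifs with h
  · exact zero_mem _
  · exact mem_Fz_of_mem hmono (hYF t (by omega)) (by omega)

/-- `H_c = Σ_{s ≥ 1} Y_s (u-c)^{-s}`. -/
noncomputable def Hser (Y : ℕ → B) (c : ℕ) : PowerSeries B := shiftHom c (h0 Y)

lemma shiftHom_mem_W (hmono : Monotone F) {f : PowerSeries B} {d : ℤ} (hf : f ∈ W F d)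
    (c : ℕ) : shiftHom c f ∈ W F d := by
  intro t
  rw [coeff_shiftHom]
  refine Submodule.sum_mem _ fun s hs => ?_
  rw [← Nat.cast_smul_eq_nsmul k]
  refine Submodule.smul_mem _ _ (Fz_mono hmono ?_ (hf s))
  have := mem_range.mp hs
  omega

lemma Hser_mem (hmono : Monotone F) (hYF : ∀ r, 1 ≤ r → Y r ∈ F (r - 1)) (c : ℕ) :
    Hser Y c ∈ W F 1 := shiftHom_mem_W hmono (h0_mem hmono hYF) c

lemma shiftSer_eq_shiftHom (Y : ℕ → B) (c : ℕ) : shiftSer B c Y = shiftHom c (mk Y) := by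
  ext t
  rw [shiftSer, PowerSeries.coeff_mk, coeff_shiftHom]
  refine Finset.sum_congr rfl fun s _ => ?_
  rw [PowerSeries.coeff_mk]
  rfl

lemma mk_eq_one_add_h0 (hY0 : Y 0 = 1) : (mk Y : PowerSeries B) = 1 + h0 Y := by
  ext t
  rw [PowerSeries.coeff_mk, map_add, PowerSeries.coeff_one, coeff_h0]
  split_ifs with h
  · subst h
    rw [hY0, add_zero]
  · rw [zero_add]

lemma shiftSer_eq_one_add (hY0 : Y 0 = 1) (c : ℕ) :
    shiftSer B c Y = 1 + Hser Y c := by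
  rw [shiftSer_eq_shiftHom, mk_eq_one_add_h0 hY0, map_add, map_one, Hser]

lemma Hser_sub_h0_mem (hmono : Monotone F) (hYF : ∀ r, 1 ≤ r → Y r ∈ F (r - 1)) (c : ℕ) :
    Hser Y c - h0 Y ∈ W F 2 := by
  intro t
  rw [map_sub, Hser, coeff_shiftHom]
  rcases Nat.eq_zero_or_pos t with rfl | ht
  · have h1 : ∑ s ∈ range (0 + 1), nK c 0 s • coeff (R := B) s (h0 Y) = 0 := by
      simp [coeff_h0]
    rw [h1, coeff_h0, if_pos rfl, sub_zero]
    exact zero_mem _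
  · rw [Finset.sum_range_succ]
    have hlast : nK c t t • coeff (R := B) t (h0 Y) = coeff (R := B) t (h0 Y) := by
      have h1 : nK c t t = 1 := by simp [nK]
      rw [h1, one_smul]
    rw [hlast]
    have harr : (∑ s ∈ range t, nK c t s • coeff (R := B) s (h0 Y)) + coeff (R := B) t (h0 Y)
        - coeff (R := B) t (h0 Y) = ∑ s ∈ range t, nK c t s • coeff (R := B) s (h0 Y) := by ring
    rw [harr]
    refine Submodule.sum_mem _ fun s hs => ?_
    have hs' := mem_range.mp hs
    rw [coeff_h0]
    split_ifs with h
    · rw [smul_zero]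
      exact zero_mem _
    · rw [← Nat.cast_smul_eq_nsmul k]
      exact Submodule.smul_mem _ _ (mem_Fz_of_mem hmono (hYF s (by omega)) (by omega))

/-! ### Power sums of the shifted series -/

lemma coeff_sum_shift (f : PowerSeries B) (t : ℕ) :
    coeff (R := B) t (∑ i : Fin p, shiftHom (i : ℕ) f)
      = ∑ s ∈ range (t + 1), ((t - 1).choose (t - s) * Sn p (t - s)) • coeff (R := B) s f := by
  rw [map_sum]
  rw [Fin.sum_univ_eq_sum_range (fun c => coeff (R := B) t (shiftHom c f)) p]
  simp_rw [coeff_shiftHom]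
  rw [Finset.sum_comm]
  refine Finset.sum_congr rfl fun s _ => ?_
  simp_rw [nK, mul_smul]
  rw [Sn, Finset.sum_smul, Finset.smul_sum]

lemma sum_shift_pow_mem (hmono : Monotone F) (hone : (1 : B) ∈ F 0)
    (hmul : ∀ r s : ℕ, ∀ x y : B, x ∈ F r → y ∈ F s → x * y ∈ F (r + s))
    (hYF : ∀ r, 1 ≤ r → Y r ∈ F (r - 1)) (j : ℕ) :
    (∑ i : Fin p, (Hser Y (i : ℕ)) ^ j) ∈ W F ((p : ℤ) + j - 1) := by
  have hrepr : (∑ i : Fin p, (Hser Y (i : ℕ)) ^ j)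
      = ∑ i : Fin p, shiftHom (i : ℕ) ((h0 Y) ^ j) := by
    refine Finset.sum_congr rfl fun i _ => ?_
    rw [Hser, map_pow]
  rw [hrepr]
  intro t
  rw [coeff_sum_shift]
  refine Submodule.sum_mem _ fun s hs => ?_
  have hs' := mem_range.mp hs
  have hy : coeff (R := B) s ((h0 Y) ^ j) ∈ Fz F ((s : ℤ) - j) := by
    have h1 := W_pow hone hmul (h0_mem hmono hYF) j s
    rwa [show (j : ℤ) * 1 = (j : ℤ) by ring] at h1
  rw [← Nat.cast_smul_eq_nsmul k]
  by_cases he0 : t - s = 0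
  · have hz : (((t - 1).choose (t - s) * Sn p (t - s) : ℕ) : k) = 0 := by
      push_cast
      rw [he0, Sn_cast p 0]
      norm_num
    rw [hz, zero_smul]
    exact zero_mem _
  · by_cases hdvd : (p - 1) ∣ (t - s)
    · refine Submodule.smul_mem _ _ (Fz_mono hmono ?_ hy)
      have hple : p - 1 ≤ t - s := Nat.le_of_dvd (by omega) hdvd
      have hp2 := hp.out.two_le
      omega
    · have hz : (((t - 1).choose (t - s) * Sn p (t - s) : ℕ) : k) = 0 := by
        push_cast
        rw [Sn_cast p (t - s), if_neg he0, if_neg hdvd, mul_zero]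
      rw [hz, zero_smul]
      exact zero_mem _

lemma P1_mem (hmono : Monotone F) (hone : (1 : B) ∈ F 0)
    (hmul : ∀ r s : ℕ, ∀ x y : B, x ∈ F r → y ∈ F s → x * y ∈ F (r + s))
    (hYF : ∀ r, 1 ≤ r → Y r ∈ F (r - 1)) :
    (∑ i : Fin p, Hser Y (i : ℕ)) ∈ W F (p : ℤ) := by
  have h1 := sum_shift_pow_mem p hmono hone hmul hYF 1
  simp only [pow_one] at h1
  push_cast at h1
  rwa [show (p : ℤ) + 1 - 1 = (p : ℤ) by ring] at h1

lemma P1_mem_div (hmono : Monotone F) (hYF : ∀ r, 1 ≤ r → Y r ∈ F (r - 1))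
    {t : ℕ} (ht : p ∣ t) (htp : p ≤ t) :
    coeff (R := B) t (∑ i : Fin p, Hser Y (i : ℕ)) + Y (t - p + 1) ∈ Fz F ((t : ℤ) - p - 1) := by
  have hp2 := hp.out.two_le
  rw [show (∑ i : Fin p, Hser Y (i : ℕ)) = ∑ i : Fin p, shiftHom (i : ℕ) (h0 Y) from rfl,
    coeff_sum_shift]
  set s₀ := t - p + 1 with hs₀def
  have hs₀ : s₀ ∈ range (t + 1) := mem_range.mpr (by omega)
  rw [Finset.sum_eq_sum_sdiff_singleton_add hs₀]
  have hterm : (((t - 1).choose (t - s₀) * Sn p (t - s₀)) : ℕ) • coeff (R := B) s₀ (h0 Y)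
      = - Y s₀ := by
    have h1 : t - s₀ = p - 1 := by omega
    rw [← Nat.cast_smul_eq_nsmul k, coeff_h0, if_neg (by omega)]
    have hsc : (((t - 1).choose (t - s₀) * Sn p (t - s₀) : ℕ) : k) = -1 := by
      push_cast
      rw [h1, Sn_cast p (p - 1), if_neg (by omega), if_pos dvd_rfl, lucas_one p ht htp]
      ring
    rw [hsc, neg_smul, one_smul]
  rw [hterm, add_assoc, neg_add_cancel, add_zero]
  refine Submodule.sum_mem _ fun s hsd => ?_
  obtain ⟨hs, hneq⟩ := Finset.mem_sdiff.mp hsd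
  have hs' := mem_range.mp hs
  have hneq' : s ≠ s₀ := by simpa using hneq
  rw [← Nat.cast_smul_eq_nsmul k]
  by_cases he0 : t - s = 0
  · have hz : (((t - 1).choose (t - s) * Sn p (t - s) : ℕ) : k) = 0 := by
      push_cast
      rw [he0, Sn_cast p 0]
      norm_num
    rw [hz, zero_smul]
    exact zero_mem _
  · by_cases hdvd : (p - 1) ∣ (t - s)
    · obtain ⟨q, hq⟩ := hdvd
      have hq2 : 2 ≤ q := by
        by_contra hlt
        push_neg at hlt
        interval_cases q
        · rw [mul_zero] at hq; omega
        · rw [mul_one] at hq; omega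
      have hge : 2 * (p - 1) ≤ t - s := by
        calc 2 * (p - 1) = (p - 1) * 2 := by ring
        _ ≤ (p - 1) * q := Nat.mul_le_mul_left _ hq2
        _ = t - s := hq.symm
      rw [coeff_h0]
      split_ifs with h
      · rw [smul_zero]
        exact zero_mem _
      · exact Submodule.smul_mem _ _
          (mem_Fz_of_mem hmono (hYF s (by omega)) (by omega))
    · have hz : (((t - 1).choose (t - s) * Sn p (t - s) : ℕ) : k) = 0 := by
        push_cast
        rw [Sn_cast p (t - s), if_neg he0, if_neg hdvd, mul_zero]
      rw [hz, zero_smul]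
      exact zero_mem _

lemma P1_mem_ndiv (hmono : Monotone F) (hYF : ∀ r, 1 ≤ r → Y r ∈ F (r - 1))
    {t : ℕ} (ht : ¬ p ∣ t) :
    coeff (R := B) t (∑ i : Fin p, Hser Y (i : ℕ)) ∈ Fz F ((t : ℤ) - p - 1) := by
  have hp2 := hp.out.two_le
  rw [show (∑ i : Fin p, Hser Y (i : ℕ)) = ∑ i : Fin p, shiftHom (i : ℕ) (h0 Y) from rfl,
    coeff_sum_shift]
  refine Submodule.sum_mem _ fun s hs => ?_
  have hs' := mem_range.mp hs
  rw [← Nat.cast_smul_eq_nsmul k]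
  by_cases he0 : t - s = 0
  · have hz : (((t - 1).choose (t - s) * Sn p (t - s) : ℕ) : k) = 0 := by
      push_cast
      rw [he0, Sn_cast p 0]
      norm_num
    rw [hz, zero_smul]
    exact zero_mem _
  · by_cases hdvd : (p - 1) ∣ (t - s)
    · by_cases hpe : t - s = p - 1
      · have hz : (((t - 1).choose (t - s) * Sn p (t - s) : ℕ) : k) = 0 := by
          push_cast
          rw [hpe, lucas_zero p ht, zero_mul]
        rw [hz, zero_smul]
        exact zero_mem _
      · obtain ⟨q, hq⟩ := hdvd
        have hq2 : 2 ≤ q := by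
          by_contra hlt
          push_neg at hlt
          interval_cases q
          · rw [mul_zero] at hq; omega
          · rw [mul_one] at hq; omega
        have hge : 2 * (p - 1) ≤ t - s := by
          calc 2 * (p - 1) = (p - 1) * 2 := by ring
          _ ≤ (p - 1) * q := Nat.mul_le_mul_left _ hq2
          _ = t - s := hq.symm
        rw [coeff_h0]
        split_ifs with h
        · rw [smul_zero]
          exact zero_mem _
        · exact Submodule.smul_mem _ _
            (mem_Fz_of_mem hmono (hYF s (by omega)) (by omega))
    · have hz : (((t - 1).choose (t - s) * Sn p (t - s) : ℕ) : k) = 0 := by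
        push_cast
        rw [Sn_cast p (t - s), if_neg he0, if_neg hdvd, mul_zero]
      rw [hz, zero_smul]
      exact zero_mem _

/-! ### Frobenius coefficient of h₀^p -/

lemma coeff_mul_congr {N : ℕ} {f f' g g' : PowerSeries B}
    (hf : ∀ t ≤ N, coeff (R := B) t f = coeff (R := B) t f') (hg : ∀ t ≤ N, coeff (R := B) t g = coeff (R := B) t g') :
    ∀ t ≤ N, coeff (R := B) t (f * g) = coeff (R := B) t (f' * g') := by
  intro t ht
  rw [PowerSeries.coeff_mul, PowerSeries.coeff_mul]
  refine Finset.sum_congr rfl fun ab hab => ?_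
  have := mem_antidiagonal.mp hab
  rw [hf ab.1 (by omega), hg ab.2 (by omega)]

lemma coeff_pow_congr {N : ℕ} {f g : PowerSeries B}
    (h : ∀ t ≤ N, coeff (R := B) t f = coeff (R := B) t g) :
    ∀ j, ∀ t ≤ N, coeff (R := B) t (f ^ j) = coeff (R := B) t (g ^ j) := by
  intro j
  induction j with
  | zero => intro t ht; rfl
  | succ n ih =>
      intro t ht
      rw [pow_succ, pow_succ]
      exact coeff_mul_congr ih h t ht

lemma coeff_h0_pow [CharP B p] (Y : ℕ → B) {r : ℕ} (hr : 1 ≤ r) :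
    coeff (R := B) r ((h0 Y) ^ p) = if p ∣ r then (Y (r / p)) ^ p else 0 := by
  haveI : CharP (PowerSeries B) p := charP_of_injective_ringHom
    (show Function.Injective (C (R := B)) from fun a b h => by
      simpa using congrArg (PowerSeries.constantCoeff (R := B)) h) p
  haveI : ExpChar (PowerSeries B) p := ExpChar.prime hp.out
  have hagree : ∀ t ≤ r, coeff (R := B) t (h0 Y)
      = coeff (R := B) t (∑ s ∈ range (r + 1), C (R := B) (coeff (R := B) s (h0 Y)) * PowerSeries.X ^ s) := by
    intro t ht
    rw [map_sum]
    simp_rw [PowerSeries.coeff_C_mul, PowerSeries.coeff_X_pow]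
    simp only [mul_ite, mul_one, mul_zero]
    rw [Finset.sum_ite_eq (range (r + 1)) t (fun s => coeff (R := B) s (h0 Y)),
      if_pos (mem_range.mpr (by omega))]
  have h1 := coeff_pow_congr hagree p r le_rfl
  rw [h1, sum_pow_char]
  have hterm : ∀ s : ℕ, (C (R := B) (coeff (R := B) s (h0 Y)) * PowerSeries.X ^ s) ^ p
      = C (R := B) ((coeff (R := B) s (h0 Y)) ^ p) * PowerSeries.X ^ (s * p) := by
    intro s
    rw [mul_pow, ← map_pow, ← pow_mul]
  simp_rw [hterm]
  rw [map_sum]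
  simp_rw [PowerSeries.coeff_C_mul, PowerSeries.coeff_X_pow]
  have hppos : 0 < p := hp.out.pos
  by_cases hd : p ∣ r
  · rw [if_pos hd]
    have hrp : r / p ∈ range (r + 1) := mem_range.mpr (by
      have := Nat.div_le_self r p
      omega)
    rw [Finset.sum_eq_single_of_mem (r / p) hrp ?_]
    · rw [if_pos (Nat.div_mul_cancel hd).symm, mul_one, coeff_h0, if_neg ?_]
      have hpr : p ≤ r := Nat.le_of_dvd (by omega) hd
      have := Nat.div_pos hpr hppos
      omega
    · intro s hs hne
      rw [if_neg ?_, mul_zero]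
      intro heq
      have h2 : r / p = s := by rw [heq, Nat.mul_div_cancel _ hppos]
      exact hne h2.symm
  · rw [if_neg hd]
    refine Finset.sum_eq_zero fun s hs => ?_
    rw [if_neg ?_, mul_zero]
    intro heq
    exact hd (by rw [heq]; exact dvd_mul_left p s)

/-! ### Telescoping -/

lemma prod_sub_pow_mem (hmono : Monotone F) (hone : (1 : B) ∈ F 0)
    (hmul : ∀ r s : ℕ, ∀ x y : B, x ∈ F r → y ∈ F s → x * y ∈ F (r + s))
    (hYF : ∀ r, 1 ≤ r → Y r ∈ F (r - 1)) (n : ℕ) :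
    (∏ c ∈ range n, Hser Y c) - (h0 Y) ^ n ∈ W F ((n : ℤ) + 1) := by
  induction n with
  | zero => simpa using zero_mem (W F (0 + 1))
  | succ n ih =>
      have key : (∏ c ∈ range (n + 1), Hser Y c) - (h0 Y) ^ (n + 1)
          = (∏ c ∈ range n, Hser Y c) * (Hser Y n - h0 Y)
            + ((∏ c ∈ range n, Hser Y c) - (h0 Y) ^ n) * h0 Y := by
        rw [prod_range_succ, pow_succ]
        ring
      rw [key, show ((n + 1 : ℕ) : ℤ) + 1 = ((n : ℤ) + 2) from by push_cast; ring]
      refine add_mem ?_ ?_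
      · have h1 := W_prod_range hone hmul (fun i => Hser_mem hmono hYF i) n
        exact W_mul hmul h1 (Hser_sub_h0_mem hmono hYF n)
      · have h2 := W_mul hmul ih (h0_mem hmono hYF)
        rwa [show ((n : ℤ) + 1) + 1 = (n : ℤ) + 2 from by ring] at h2

end Series


/-! ### Elementary symmetric sums and the Newton bound -/

lemma pow_mem_F {F : ℕ → Submodule k B} (hone : (1 : B) ∈ F 0)
    (hmul : ∀ r s : ℕ, ∀ x y : B, x ∈ F r → y ∈ F s → x * y ∈ F (r + s))
    {x : B} {d : ℕ} (hx : x ∈ F d) : ∀ n : ℕ, x ^ n ∈ F (n * d) := by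
  intro n
  induction n with
  | zero => simpa using hone
  | succ n ih =>
      rw [pow_succ]
      have h := hmul (n * d) d _ _ ih hx
      rwa [show n * d + d = (n + 1) * d from by ring] at h

section Esymm

variable (p : ℕ) [hp : Fact p.Prime] [CharP k p]
variable {F : ℕ → Submodule k B} {Y : ℕ → B}

/-- The `m`-th elementary symmetric function of the shifted series `H_0, …, H_{p-1}`. -/
noncomputable def Em (Y : ℕ → B) (p m : ℕ) : PowerSeries B :=
  ∑ S ∈ powersetCard m (univ : Finset (Fin p)), ∏ i ∈ S, Hser Y (i : ℕ)

lemma aeval_esymm (m : ℕ) :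
    (MvPolynomial.aeval fun i : Fin p => Hser Y (i : ℕ))
      (MvPolynomial.esymm (Fin p) (PowerSeries B) m) = Em Y p m := by
  rw [MvPolynomial.esymm, map_sum, Em]
  refine Finset.sum_congr rfl fun S _ => ?_
  rw [map_prod]
  exact Finset.prod_congr rfl fun i _ => MvPolynomial.aeval_X _ _

lemma aeval_psum (j : ℕ) :
    (MvPolynomial.aeval fun i : Fin p => Hser Y (i : ℕ))
      (MvPolynomial.psum (Fin p) (PowerSeries B) j) = ∑ i : Fin p, (Hser Y (i : ℕ)) ^ j := by
  rw [MvPolynomial.psum, map_sum]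
  refine Finset.sum_congr rfl fun i _ => ?_
  rw [map_pow, MvPolynomial.aeval_X]

lemma Em_zero : Em Y p 0 = 1 := by
  simp [Em]

lemma Em_one : Em Y p 1 = ∑ i : Fin p, Hser Y (i : ℕ) := by
  rw [Em, Finset.powersetCard_one, Finset.sum_map]
  refine Finset.sum_congr rfl fun i _ => ?_
  simp

lemma Em_top : Em Y p p = ∏ i : Fin p, Hser Y (i : ℕ) := by
  rw [Em]
  have hps : powersetCard p (univ : Finset (Fin p)) = {univ} := by
    have h := Finset.powersetCard_self (univ : Finset (Fin p))
    rwa [card_univ, Fintype.card_fin] at h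
  rw [hps, Finset.sum_singleton]

lemma neg_one_pow_mul_mem {M : Submodule k (PowerSeries B)} {x : PowerSeries B}
    (e : ℕ) (h : x ∈ M) : (-1 : PowerSeries B) ^ e * x ∈ M := by
  rcases Nat.even_or_odd e with he | he
  · rw [he.neg_one_pow, one_mul]; exact h
  · rw [he.neg_one_pow, neg_one_mul]; exact neg_mem h

lemma Em_mem (hmono : Monotone F) (hone : (1 : B) ∈ F 0)
    (hmul : ∀ r s : ℕ, ∀ x y : B, x ∈ F r → y ∈ F s → x * y ∈ F (r + s))
    (hYF : ∀ r, 1 ≤ r → Y r ∈ F (r - 1)) :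
    ∀ m, 1 ≤ m → m ≤ p - 1 → Em Y p m ∈ W F ((p : ℤ) + m - 1) := by
  intro m
  induction m using Nat.strong_induction_on with
  | _ m ih =>
    intro h1 h2
    have hp2 := hp.out.two_le
    have newton := congrArg (MvPolynomial.aeval fun i : Fin p => Hser Y (i : ℕ))
      (MvPolynomial.mul_esymm_eq_sum (Fin p) (PowerSeries B) m)
    simp only [map_mul, map_pow, map_neg, map_one, map_natCast, map_sum,
      aeval_esymm, aeval_psum] at newton
    have hmem : ((m : ℕ) : PowerSeries B) * Em Y p m ∈ W F ((p : ℤ) + m - 1) := by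
      rw [newton]
      refine neg_one_pow_mul_mem _ (Submodule.sum_mem _ fun a ha => ?_)
      obtain ⟨hmem1, hlt⟩ := Finset.mem_filter.mp ha
      have hsum := mem_antidiagonal.mp hmem1
      rw [mul_assoc]
      refine neg_one_pow_mul_mem _ ?_
      rcases Nat.eq_zero_or_pos a.1 with h0 | hpos
      · rw [h0, Em_zero, one_mul]
        have h := sum_shift_pow_mem p hmono hone hmul hYF a.2
        rwa [show (p : ℤ) + (a.2 : ℤ) - 1 = (p : ℤ) + (m : ℤ) - 1 from by omega] at h
      · have e1 := ih a.1 (by omega) hpos (by omega)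
        have e2 := sum_shift_pow_mem p hmono hone hmul hYF a.2
        have h := W_mul hmul e1 e2
        refine W_mono hmono ?_ h
        omega
    have hscal : ((m : ℕ) : PowerSeries B) * Em Y p m = (m : k) • Em Y p m := by
      rw [Nat.cast_smul_eq_nsmul k m (Em Y p m), nsmul_eq_mul]
    rw [hscal] at hmem
    have hm : (m : k) ≠ 0 := by
      rw [Ne, CharP.cast_eq_zero_iff k p]
      intro hdvd
      have := Nat.le_of_dvd (by omega) hdvd
      omega
    have hfinal := Submodule.smul_mem (W F ((p : ℤ) + m - 1)) (m : k)⁻¹ hmem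
    rwa [inv_smul_smul₀ hm] at hfinal

end Esymm

/-! ### The master lemma over a commutative algebra -/

lemma list_prod_eq (Y : ℕ → B) (p : ℕ) :
    ((List.range p).map fun m => shiftSer B m Y).prod = ∏ i ∈ range p, shiftSer B i Y := by
  induction p with
  | zero => simp
  | succ n ih =>
      rw [List.range_succ, List.map_append, List.prod_append, prod_range_succ, ih]
      simp

theorem master
    (p : ℕ) [hp : Fact p.Prime] [CharP k p] [CharP B p]
    (F : ℕ → Submodule k B) (hmono : Monotone F) (hone : (1 : B) ∈ F 0)
    (hmul : ∀ r s : ℕ, ∀ x y : B, x ∈ F r → y ∈ F s → x * y ∈ F (r + s))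
    (Y : ℕ → B) (hY0 : Y 0 = 1) (hYF : ∀ r : ℕ, 1 ≤ r → Y r ∈ F (r - 1)) :
    (coeff (R := B) 0 (((List.range p).map fun m => shiftSer B m Y).prod) = 1) ∧
    (∀ r : ℕ, 1 ≤ r → r < p →
      coeff (R := B) r (((List.range p).map fun m => shiftSer B m Y).prod) = 0) ∧
    (coeff (R := B) p (((List.range p).map fun m => shiftSer B m Y).prod)
        = (Y 1) ^ p - Y 1 ∧ (Y 1) ^ p - Y 1 ∈ F 0) ∧
    (∀ r : ℕ, p < r → p ∣ r →
      coeff (R := B) r (((List.range p).map fun m => shiftSer B m Y).prod) ∈ F (r - p) ∧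
      coeff (R := B) r (((List.range p).map fun m => shiftSer B m Y).prod)
        - ((Y (r / p)) ^ p - Y (r - p + 1)) ∈ F (r - p - 1)) ∧
    (∀ r : ℕ, p < r → ¬ p ∣ r →
      coeff (R := B) r (((List.range p).map fun m => shiftSer B m Y).prod)
        ∈ F (r - p - 1)) := by
  have hp2 := hp.out.two_le
  have hg : ((List.range p).map fun m => shiftSer B m Y).prod
      = 1 + (∑ i : Fin p, Hser Y (i : ℕ)) + (h0 Y) ^ p
        + ((∑ m ∈ Ico 2 p, Em Y p m) + (Em Y p p - (h0 Y) ^ p)) := by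
    rw [list_prod_eq, ← Fin.prod_univ_eq_prod_range (fun c => shiftSer B c Y) p]
    rw [Finset.prod_congr rfl (fun (i : Fin p) _ => by
      rw [shiftSer_eq_one_add hY0, add_comm] :
      ∀ i ∈ (univ : Finset (Fin p)), shiftSer B (i : ℕ) Y = Hser Y (i : ℕ) + 1)]
    rw [Finset.prod_add]
    simp only [Finset.prod_const_one, mul_one]
    rw [Finset.sum_powerset, card_univ, Fintype.card_fin]
    have hEm : ∀ j ∈ range (p + 1),
        (∑ S ∈ powersetCard j (univ : Finset (Fin p)), ∏ i ∈ S, Hser Y (i : ℕ)) = Em Y p j :=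
      fun j _ => rfl
    rw [Finset.sum_congr rfl hEm, Finset.sum_range_succ, Finset.range_eq_Ico,
      ← Finset.sum_Ico_consecutive (Em Y p) (show 0 ≤ 2 by omega) (show 2 ≤ p by omega),
      show Ico 0 2 = range 2 from by rw [Finset.range_eq_Ico],
      Finset.sum_range_succ, Finset.sum_range_one, Em_zero, Em_one]
    ring
  have hcoeff : ∀ r : ℕ, coeff (R := B) r (((List.range p).map fun m => shiftSer B m Y).prod)
      = coeff (R := B) r (1 : PowerSeries B) + coeff (R := B) r (∑ i : Fin p, Hser Y (i : ℕ))
        + coeff (R := B) r ((h0 Y) ^ p)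
        + coeff (R := B) r ((∑ m ∈ Ico 2 p, Em Y p m) + (Em Y p p - (h0 Y) ^ p)) := by
    intro r
    rw [hg]
    simp only [map_add]
  have hR : ((∑ m ∈ Ico 2 p, Em Y p m) + (Em Y p p - (h0 Y) ^ p)) ∈ W F ((p : ℤ) + 1) := by
    refine add_mem (Submodule.sum_mem _ fun m hm => ?_) ?_
    · obtain ⟨hm2, hmp⟩ := mem_Ico.mp hm
      exact W_mono hmono (by omega) (Em_mem p hmono hone hmul hYF m (by omega) (by omega))
    · rw [Em_top, Fin.prod_univ_eq_prod_range (fun c => Hser Y c) p]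
      exact prod_sub_pow_mem hmono hone hmul hYF p
  have hh0p : (h0 Y) ^ p ∈ W F (p : ℤ) := by
    have h := W_pow hone hmul (h0_mem hmono hYF) p
    rwa [show (p : ℤ) * 1 = (p : ℤ) from by ring] at h
  have hP1W := P1_mem p hmono hone hmul hYF
  refine ⟨?_, ?_, ⟨?_, ?_⟩, ?_, ?_⟩
  · -- coeff 0 = 1
    have z2 : coeff (R := B) 0 (∑ i : Fin p, Hser Y (i : ℕ)) = 0 :=
      eq_zero_of_mem_Fz_neg F (by omega) (hP1W 0)
    have z3 : coeff (R := B) 0 ((h0 Y) ^ p) = 0 :=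
      eq_zero_of_mem_Fz_neg F (by omega) (hh0p 0)
    have z4 : coeff (R := B) 0 ((∑ m ∈ Ico 2 p, Em Y p m) + (Em Y p p - (h0 Y) ^ p)) = 0 :=
      eq_zero_of_mem_Fz_neg F (by omega) (hR 0)
    rw [hcoeff 0, z2, z3, z4, PowerSeries.coeff_one, if_pos rfl]
    ring
  · -- 1 ≤ r < p
    intro r hr1 hrp
    have hnd : ¬ p ∣ r := fun hd => by
      have := Nat.le_of_dvd (by omega) hd
      omega
    have z1 : coeff (R := B) r (1 : PowerSeries B) = 0 := by
      rw [PowerSeries.coeff_one, if_neg (by omega)]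
    have z2 : coeff (R := B) r (∑ i : Fin p, Hser Y (i : ℕ)) = 0 :=
      eq_zero_of_mem_Fz_neg F (by omega) (P1_mem_ndiv p hmono hYF hnd)
    have z3 : coeff (R := B) r ((h0 Y) ^ p) = 0 :=
      eq_zero_of_mem_Fz_neg F (by omega) (hh0p r)
    have z4 : coeff (R := B) r ((∑ m ∈ Ico 2 p, Em Y p m) + (Em Y p p - (h0 Y) ^ p)) = 0 :=
      eq_zero_of_mem_Fz_neg F (by omega) (hR r)
    rw [hcoeff r, z1, z2, z3, z4]
    ring
  · -- r = p
    have hz := eq_zero_of_mem_Fz_neg F (by omega)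
      (P1_mem_div p hmono hYF (dvd_refl p) (le_refl p))
    rw [show p - p + 1 = 1 from by omega] at hz
    have hP1eq : coeff (R := B) p (∑ i : Fin p, Hser Y (i : ℕ)) = - Y 1 :=
      eq_neg_of_add_eq_zero_left hz
    have hfrob := coeff_h0_pow p Y (show 1 ≤ p by omega)
    rw [if_pos (dvd_refl p), Nat.div_self (show 0 < p by omega)] at hfrob
    have z1 : coeff (R := B) p (1 : PowerSeries B) = 0 := by
      rw [PowerSeries.coeff_one, if_neg (by omega)]
    have z4 : coeff (R := B) p ((∑ m ∈ Ico 2 p, Em Y p m) + (Em Y p p - (h0 Y) ^ p)) = 0 :=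
      eq_zero_of_mem_Fz_neg F (by omega) (hR p)
    rw [hcoeff p, z1, hP1eq, hfrob, z4]
    ring
  · -- Y 1 ^ p - Y 1 ∈ F 0
    have hY1 : Y 1 ∈ F 0 := by simpa using hYF 1 le_rfl
    have hpow := pow_mem_F hone hmul hY1 p
    rw [show p * 0 = 0 from by ring] at hpow
    exact sub_mem hpow hY1
  · -- p < r, p ∣ r
    intro r hrp hd
    have z1 : coeff (R := B) r (1 : PowerSeries B) = 0 := by
      rw [PowerSeries.coeff_one, if_neg (by omega)]
    have hfrob := coeff_h0_pow p Y (show 1 ≤ r by omega)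
    rw [if_pos hd] at hfrob
    have m1 : coeff (R := B) r (∑ i : Fin p, Hser Y (i : ℕ)) ∈ F (r - p) := by
      have h := hP1W r
      rwa [show (r : ℤ) - p = ((r - p : ℕ) : ℤ) from by omega, Fz_natCast] at h
    have m3 : coeff (R := B) r ((∑ m ∈ Ico 2 p, Em Y p m) + (Em Y p p - (h0 Y) ^ p))
        ∈ F (r - p - 1) := by
      have h := hR r
      rwa [show (r : ℤ) - ((p : ℤ) + 1) = ((r - p - 1 : ℕ) : ℤ) from by omega, Fz_natCast] at h
    have hYrp : (Y (r / p)) ^ p ∈ F (r - p) := by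
      obtain ⟨q, rfl⟩ := hd
      obtain ⟨q', rfl⟩ : ∃ q', q = q' + 1 := by
        refine ⟨q - 1, ?_⟩
        rcases Nat.eq_zero_or_pos q with rfl | hq
        · simp at hrp
        · omega
      have hdiv : p * (q' + 1) / p = q' + 1 := Nat.mul_div_cancel_left _ (by omega)
      rw [hdiv]
      have h := pow_mem_F hone hmul (hYF (q' + 1) (by omega)) p
      rwa [show p * (q' + 1 - 1) = p * (q' + 1) - p from by
        rw [Nat.add_sub_cancel]
        have h2 : p * (q' + 1) = p * q' + p := by ring
        omega] at h
    constructor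
    · rw [hcoeff r, z1, hfrob]
      have harr : (0 : B) + coeff (R := B) r (∑ i : Fin p, Hser Y (i : ℕ)) + (Y (r / p)) ^ p
          + coeff (R := B) r ((∑ m ∈ Ico 2 p, Em Y p m) + (Em Y p p - (h0 Y) ^ p))
          = (coeff (R := B) r (∑ i : Fin p, Hser Y (i : ℕ)) + (Y (r / p)) ^ p)
            + coeff (R := B) r ((∑ m ∈ Ico 2 p, Em Y p m) + (Em Y p p - (h0 Y) ^ p)) := by ring
      rw [harr]
      exact add_mem (add_mem m1 hYrp) (hmono (by omega) m3)
    · have hb : coeff (R := B) r (∑ i : Fin p, Hser Y (i : ℕ)) + Y (r - p + 1) ∈ F (r - p - 1) := by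
        have h := P1_mem_div p hmono hYF hd (by omega)
        rwa [show (r : ℤ) - p - 1 = ((r - p - 1 : ℕ) : ℤ) from by omega, Fz_natCast] at h
      rw [hcoeff r, z1, hfrob]
      have harr : (0 : B) + coeff (R := B) r (∑ i : Fin p, Hser Y (i : ℕ)) + (Y (r / p)) ^ p
          + coeff (R := B) r ((∑ m ∈ Ico 2 p, Em Y p m) + (Em Y p p - (h0 Y) ^ p))
          - ((Y (r / p)) ^ p - Y (r - p + 1))
          = (coeff (R := B) r (∑ i : Fin p, Hser Y (i : ℕ)) + Y (r - p + 1))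
            + coeff (R := B) r ((∑ m ∈ Ico 2 p, Em Y p m) + (Em Y p p - (h0 Y) ^ p)) := by ring
      rw [harr]
      exact add_mem hb m3
  · -- p < r, ¬ p ∣ r
    intro r hrp hnd
    have z1 : coeff (R := B) r (1 : PowerSeries B) = 0 := by
      rw [PowerSeries.coeff_one, if_neg (by omega)]
    have hfrob := coeff_h0_pow p Y (show 1 ≤ r by omega)
    rw [if_neg hnd] at hfrob
    have m1 : coeff (R := B) r (∑ i : Fin p, Hser Y (i : ℕ)) ∈ F (r - p - 1) := by
      have h := P1_mem_ndiv p hmono hYF hnd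
      rwa [show (r : ℤ) - p - 1 = ((r - p - 1 : ℕ) : ℤ) from by omega, Fz_natCast] at h
    have m3 : coeff (R := B) r ((∑ m ∈ Ico 2 p, Em Y p m) + (Em Y p p - (h0 Y) ^ p))
        ∈ F (r - p - 1) := by
      have h := hR r
      rwa [show (r : ℤ) - ((p : ℤ) + 1) = ((r - p - 1 : ℕ) : ℤ) from by omega, Fz_natCast] at h
    rw [hcoeff r, z1, hfrob]
    have harr : (0 : B) + coeff (R := B) r (∑ i : Fin p, Hser Y (i : ℕ)) + 0
        + coeff (R := B) r ((∑ m ∈ Ico 2 p, Em Y p m) + (Em Y p p - (h0 Y) ^ p))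
        = coeff (R := B) r (∑ i : Fin p, Hser Y (i : ℕ))
          + coeff (R := B) r ((∑ m ∈ Ico 2 p, Em Y p m) + (Em Y p p - (h0 Y) ^ p)) := by ring
    rw [harr]
    exact add_mem m1 m3

end TypeIIIProof

/-- **series of type III, top coefficient.** -/
theorem typeIII_series
    (k : Type) [Field k] (p : ℕ) [Fact p.Prime] [CharP k p]
    (A : Type) [Ring A] [Algebra k A]
    (F : ℕ → Submodule k A) (hmono : Monotone F) (hone : (1 : A) ∈ F 0)
    (hmul : ∀ r s : ℕ, ∀ x y : A, x ∈ F r → y ∈ F s → x * y ∈ F (r + s))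
    (X : ℕ → A) (hX0 : X 0 = 1)
    (hXcomm : ∀ r s : ℕ, X r * X s = X s * X r)
    (hXF : ∀ r : ℕ, 1 ≤ r → X r ∈ F (r - 1)) :
    (PowerSeries.coeff (R := A) 0 (((List.range p).map fun m => shiftSer A m X).prod) = 1) ∧
    (∀ r : ℕ, 1 ≤ r → r < p →
      PowerSeries.coeff (R := A) r (((List.range p).map fun m => shiftSer A m X).prod) = 0) ∧
    (PowerSeries.coeff (R := A) p (((List.range p).map fun m => shiftSer A m X).prod)
        = (X 1) ^ p - X 1 ∧ (X 1) ^ p - X 1 ∈ F 0) ∧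
    (∀ r : ℕ, p < r → p ∣ r →
      PowerSeries.coeff (R := A) r (((List.range p).map fun m => shiftSer A m X).prod) ∈ F (r - p) ∧
      PowerSeries.coeff (R := A) r (((List.range p).map fun m => shiftSer A m X).prod)
        - ((X (r / p)) ^ p - X (r - p + 1)) ∈ F (r - p - 1)) ∧
    (∀ r : ℕ, p < r → ¬ p ∣ r →
      PowerSeries.coeff (R := A) r (((List.range p).map fun m => shiftSer A m X).prod)
        ∈ F (r - p - 1)) := by
  classical
  rcases subsingleton_or_nontrivial A with hA | hA
  · have hmem : ∀ (x : A) (M : Submodule k A), x ∈ M := fun x M => by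
      rw [Subsingleton.elim x (0 : A)]
      exact zero_mem _
    exact ⟨Subsingleton.elim _ _, fun r _ _ => Subsingleton.elim _ _,
      ⟨Subsingleton.elim _ _, hmem _ _⟩,
      fun r _ _ => ⟨hmem _ _, hmem _ _⟩, fun r _ _ => hmem _ _⟩
  · set S := Algebra.adjoin k (Set.range X) with hS
    letI : CommRing S := Algebra.adjoinCommRingOfComm k
      (by rintro a ⟨r, rfl⟩ b ⟨s, rfl⟩; exact hXcomm r s)
    haveI : CharP S p := by
      have hinj : Function.Injective (algebraMap k S) := by
        intro a b hab
        have h2 : (algebraMap k A) a = (algebraMap k A) b := by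
          have h3 := congrArg (Subalgebra.val S) hab
          simpa using h3
        exact (algebraMap k A).injective h2
      exact charP_of_injective_algebraMap hinj p
    set Y : ℕ → S := fun n => ⟨X n, Algebra.subset_adjoin ⟨n, rfl⟩⟩ with hY
    set F' : ℕ → Submodule k S := fun n => (F n).comap (Subalgebra.val S).toLinearMap with hF'
    have hmono' : Monotone F' := fun a b hab => Submodule.comap_mono (hmono hab)
    have hone' : (1 : S) ∈ F' 0 := by
      show ((Subalgebra.val S).toLinearMap (1 : S)) ∈ F 0
      simpa using hone
    have hmul' : ∀ r s : ℕ, ∀ x y : S, x ∈ F' r → y ∈ F' s → x * y ∈ F' (r + s) := by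
      intro r s x y hx hy
      show ((Subalgebra.val S).toLinearMap (x * y)) ∈ F (r + s)
      have hxv : ((Subalgebra.val S).toLinearMap x) ∈ F r := hx
      have hyv : ((Subalgebra.val S).toLinearMap y) ∈ F s := hy
      have hmm : (Subalgebra.val S).toLinearMap (x * y)
          = (Subalgebra.val S).toLinearMap x * (Subalgebra.val S).toLinearMap y := by
        simp
      rw [hmm]
      exact hmul r s _ _ hxv hyv
    have hY0 : Y 0 = 1 := Subtype.ext hX0
    have hYF : ∀ r : ℕ, 1 ≤ r → Y r ∈ F' (r - 1) := by
      intro r hr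
      show ((Subalgebra.val S).toLinearMap (Y r)) ∈ F (r - 1)
      exact hXF r hr
    obtain ⟨m1, m2, ⟨m3a, m3b⟩, m4, m5⟩ :=
      TypeIIIProof.master p F' hmono' hone' hmul' Y hY0 hYF
    have hmapshift : ∀ m : ℕ,
        PowerSeries.map (Subalgebra.val S).toRingHom (shiftSer S m Y) = shiftSer A m X := by
      intro m
      ext t
      rw [PowerSeries.coeff_map, shiftSer, shiftSer, PowerSeries.coeff_mk,
        PowerSeries.coeff_mk, map_sum]
      refine Finset.sum_congr rfl fun s _ => ?_
      rw [map_nsmul]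
      rfl
    have hmap : (((List.range p).map fun m => shiftSer A m X).prod)
        = PowerSeries.map (Subalgebra.val S).toRingHom
            (((List.range p).map fun m => shiftSer S m Y).prod) := by
      rw [map_list_prod (PowerSeries.map (Subalgebra.val S).toRingHom :
        PowerSeries S →+* PowerSeries A), List.map_map]
      congr 1
      refine List.map_congr_left fun m _ => ?_
      exact (hmapshift m).symm
    have hco : ∀ r : ℕ,
        PowerSeries.coeff (R := A) r (((List.range p).map fun m => shiftSer A m X).prod)
          = (Subalgebra.val S)
              (PowerSeries.coeff (R := S) r (((List.range p).map fun m => shiftSer S m Y).prod)) := by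
      intro r
      rw [hmap, PowerSeries.coeff_map]
      rfl
    refine ⟨?_, ?_, ⟨?_, ?_⟩, ?_, ?_⟩
    · rw [hco 0, m1, map_one]
    · intro r h1 h2
      rw [hco r, m2 r h1 h2, map_zero]
    · rw [hco p, m3a, map_sub, map_pow]
      rfl
    · have hxy : (X 1) ^ p - X 1 = (Subalgebra.val S) ((Y 1) ^ p - Y 1) := by
        rw [map_sub, map_pow]
        rfl
      rw [hxy]
      exact Submodule.mem_comap.mp m3b
    · intro r h1 h2
      obtain ⟨n4a, n4b⟩ := m4 r h1 h2
      constructor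
      · rw [hco r]
        exact Submodule.mem_comap.mp n4a
      · have hxy : PowerSeries.coeff (R := A) r (((List.range p).map fun m => shiftSer A m X).prod)
            - ((X (r / p)) ^ p - X (r - p + 1))
            = (Subalgebra.val S)
                (PowerSeries.coeff (R := S) r (((List.range p).map fun m => shiftSer S m Y).prod)
                  - ((Y (r / p)) ^ p - Y (r - p + 1))) := by
          rw [map_sub, map_sub, map_pow, hco r]
          rfl
        rw [hxy]
        exact Submodule.mem_comap.mp n4b
    · intro r h1 h2
      rw [hco r]
      exact Submodule.mem_comap.mp (m5 r h1 h2)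
end

section
/- (Series of type IV, top coefficient.) Suppose given pairwise commuting elements X^{(r)} ∈ F_{r−1} A for all r ≥ 1, and set X^{(0)} := 0. Let X_IV^{(r)} be the u^{−r}-coefficient of the product ∏_{i=1}^{p} (Σ_{s≥0} X^{(s)} (u−(i−1))^{−s}). Then: X_IV^{(r)} = 0 for r < p; X_IV^{(p)} = (X^{(1)})^p ∈ F_0 A; if r > p and p ∣ r then X_IV^{(r)} ∈ F_{r−p} A and X_IV^{(r)} − (X^{(r/p)})^p ∈ F_{r−p−1} A; and if r > p and p ∤ r then X_IV^{(r)} ∈ F_{r−p−1} A. -/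
open PowerSeries

private lemma auxA {R : Type*} [Semiring R] (l : List (PowerSeries R))
    (h0 : ∀ f ∈ l, coeff 0 f = 0) :
    ∀ r, r < l.length → coeff r l.prod = 0 := by
  induction l with
  | nil => intro r hr; simp at hr
  | cons f t ih =>
    intro r hr
    rw [List.prod_cons, coeff_mul]
    apply Finset.sum_eq_zero
    rintro ⟨i, j⟩ hij
    rw [Finset.HasAntidiagonal.mem_antidiagonal] at hij
    rcases Nat.eq_zero_or_pos i with hi | hi
    · subst hi
      rw [h0 f (List.mem_cons_self (a := f) (l := t)), zero_mul]
    · rw [ih (fun g hg => h0 g (List.mem_cons_of_mem _ hg)) j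
        (by simp only [List.length_cons] at hr; omega), mul_zero]

private lemma auxB {R : Type*} [Semiring R] (l : List (PowerSeries R))
    (h0 : ∀ f ∈ l, coeff 0 f = 0) :
    coeff l.length l.prod = (l.map (coeff 1)).prod := by
  induction l with
  | nil => simp
  | cons f t ih =>
    have h0t : ∀ g ∈ t, coeff 0 g = 0 := fun g hg => h0 g (List.mem_cons_of_mem _ hg)
    rw [List.prod_cons, List.length_cons, List.map_cons, List.prod_cons, coeff_mul, ← ih h0t]
    rw [Finset.sum_eq_single (1, t.length)]
    · rintro ⟨i, j⟩ hij hne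
      rw [Finset.HasAntidiagonal.mem_antidiagonal] at hij
      by_cases hi0 : i = 0
      · subst hi0
        rw [h0 f (List.mem_cons_self (a := f) (l := t)), zero_mul]
      by_cases hi1 : i = 1
      · exact absurd (by rw [hi1, show j = t.length by omega]) hne
      · rw [auxA t h0t j (by omega), mul_zero]
    · intro h
      exact absurd (Finset.HasAntidiagonal.mem_antidiagonal.2 (by omega)) h

private lemma auxC {k : Type} [Field k] {A : Type} [Ring A] [Algebra k A]
    {F : ℕ → Submodule k A} (hmono : Monotone F) (hone : (1 : A) ∈ F 0)
    (hmul : ∀ r s : ℕ, ∀ x y : A, x ∈ F r → y ∈ F s → x * y ∈ F (r + s))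
    (l : List (PowerSeries A))
    (h0 : ∀ f ∈ l, coeff 0 f = 0)
    (hF : ∀ f ∈ l, ∀ t, coeff t f ∈ F (t - 1)) :
    ∀ r, coeff r l.prod ∈ F (r - l.length) := by
  induction l with
  | nil =>
    intro r
    rw [List.prod_nil, coeff_one]
    split
    · exact hmono (Nat.zero_le _) hone
    · exact zero_mem _
  | cons f t ih =>
    intro r
    have h0t : ∀ g ∈ t, coeff 0 g = 0 := fun g hg => h0 g (List.mem_cons_of_mem _ hg)
    have hFt : ∀ g ∈ t, ∀ i, coeff i g ∈ F (i - 1) :=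
      fun g hg => hF g (List.mem_cons_of_mem _ hg)
    rw [List.prod_cons, coeff_mul]
    apply Submodule.sum_mem
    rintro ⟨i, j⟩ hij
    rw [Finset.HasAntidiagonal.mem_antidiagonal] at hij
    rcases Nat.lt_or_ge j t.length with hj | hj
    · rw [auxA t h0t j hj, mul_zero]; exact zero_mem _
    rcases Nat.eq_zero_or_pos i with hi | hi
    · subst hi
      rw [h0 f (List.mem_cons_self (a := f) (l := t)), zero_mul]; exact zero_mem _
    · exact hmono (by simp only [List.length_cons]; omega)
        (hmul _ _ _ _ (hF f (List.mem_cons_self (a := f) (l := t)) i) (ih h0t hFt j))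

private lemma auxD {k : Type} [Field k] {A : Type} [Ring A] [Algebra k A]
    {F : ℕ → Submodule k A} (hmono : Monotone F) (hone : (1 : A) ∈ F 0)
    (hmul : ∀ r s : ℕ, ∀ x y : A, x ∈ F r → y ∈ F s → x * y ∈ F (r + s))
    (X : ℕ → A) (hX0 : X 0 = 0) (hXF : ∀ t, 1 ≤ t → X t ∈ F (t - 1))
    (l : List (PowerSeries A))
    (h0 : ∀ f ∈ l, coeff 0 f = 0)
    (h1 : ∀ f ∈ l, coeff 1 f = X 1)
    (hF : ∀ f ∈ l, ∀ t, coeff t f ∈ F (t - 1))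
    (hdiff : ∀ f ∈ l, ∀ t, 2 ≤ t → coeff t f - X t ∈ F (t - 2)) :
    ∀ r, coeff r (l.prod - (PowerSeries.mk X) ^ l.length) ∈ F (r - l.length - 1) := by
  have hg0 : coeff 0 (PowerSeries.mk X) = 0 := by rw [coeff_mk, hX0]
  have hg1 : coeff 1 (PowerSeries.mk X) = X 1 := coeff_mk 1 X
  have hgF : ∀ i, coeff i (PowerSeries.mk X) ∈ F (i - 1) := by
    intro i
    rcases Nat.eq_zero_or_pos i with h | h
    · subst h; rw [hg0]; exact zero_mem _
    · rw [coeff_mk]; exact hXF i h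
  have hrep0 : ∀ n : ℕ, ∀ x ∈ List.replicate n (PowerSeries.mk X), coeff 0 x = 0 :=
    fun n x hx => (List.eq_of_mem_replicate hx) ▸ hg0
  have hrep1 : ∀ n : ℕ, ∀ x ∈ List.replicate n (PowerSeries.mk X), coeff 1 x = X 1 :=
    fun n x hx => (List.eq_of_mem_replicate hx) ▸ hg1
  have topcoeff : ∀ (L : List (PowerSeries A)), (∀ x ∈ L, coeff 0 x = 0) →
      (∀ x ∈ L, coeff 1 x = X 1) → coeff L.length L.prod = (X 1) ^ L.length := by
    intro L hL0 hL1
    rw [auxB L hL0, List.prod_eq_pow_card _ (X 1) ?_, List.length_map]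
    rintro x hx
    rw [List.mem_map] at hx
    obtain ⟨a, ha, rfl⟩ := hx
    exact hL1 a ha
  induction l with
  | nil =>
    intro r
    simp only [List.length_nil, List.prod_nil, pow_zero, sub_self, map_zero]
    exact zero_mem _
  | cons f t ih =>
    intro r
    have h0t : ∀ g ∈ t, coeff 0 g = 0 := fun g hg => h0 g (List.mem_cons_of_mem _ hg)
    have h1t : ∀ g ∈ t, coeff 1 g = X 1 := fun g hg => h1 g (List.mem_cons_of_mem _ hg)
    have hFt : ∀ g ∈ t, ∀ i, coeff i g ∈ F (i - 1) :=
      fun g hg => hF g (List.mem_cons_of_mem _ hg)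
    have hdifft : ∀ g ∈ t, ∀ i, 2 ≤ i → coeff i g - X i ∈ F (i - 2) :=
      fun g hg => hdiff g (List.mem_cons_of_mem _ hg)
    have key : (f :: t).prod - (PowerSeries.mk X) ^ (t.length + 1)
        = (f - PowerSeries.mk X) * t.prod
          + (PowerSeries.mk X) * (t.prod - (PowerSeries.mk X) ^ t.length) := by
      rw [List.prod_cons, pow_succ']
      noncomm_ring
    rw [List.length_cons, key, map_add]
    apply Submodule.add_mem
    · rw [coeff_mul]
      apply Submodule.sum_mem
      rintro ⟨i, j⟩ hij
      rw [Finset.HasAntidiagonal.mem_antidiagonal] at hij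
      rcases Nat.lt_or_ge j t.length with hj | hj
      · rw [auxA t h0t j hj, mul_zero]; exact zero_mem _
      rcases Nat.lt_or_ge i 2 with hi | hi
      · have hz : coeff i (f - PowerSeries.mk X) = 0 := by
          interval_cases i
          · rw [map_sub, h0 f (List.mem_cons_self (a := f) (l := t)), hg0, sub_zero]
          · rw [map_sub, h1 f (List.mem_cons_self (a := f) (l := t)), hg1, sub_self]
        rw [hz, zero_mul]; exact zero_mem _
      · have hmem1 : coeff i (f - PowerSeries.mk X) ∈ F (i - 2) := by
          rw [map_sub, coeff_mk]
          exact hdiff f (List.mem_cons_self (a := f) (l := t)) i hi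
        have hmem2 := auxC hmono hone hmul t h0t hFt j
        exact hmono (by omega) (hmul _ _ _ _ hmem1 hmem2)
    · rw [coeff_mul]
      apply Submodule.sum_mem
      rintro ⟨i, j⟩ hij
      rw [Finset.HasAntidiagonal.mem_antidiagonal] at hij
      rcases Nat.lt_or_ge j (t.length + 1) with hj | hj
      · have hz : coeff j (t.prod - (PowerSeries.mk X) ^ t.length) = 0 := by
          rcases Nat.lt_or_ge j t.length with h | h
          · rw [map_sub, ← List.prod_replicate, auxA t h0t j h,
              auxA _ (hrep0 t.length) j (by rw [List.length_replicate]; omega), sub_self]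
          · have hjl : j = t.length := by omega
            have e2 : coeff t.length ((List.replicate t.length (PowerSeries.mk X)).prod)
                = X 1 ^ t.length := by
              have := topcoeff (List.replicate t.length (PowerSeries.mk X)) (hrep0 _) (hrep1 _)
              rwa [List.length_replicate] at this
            rw [hjl, map_sub, ← List.prod_replicate, topcoeff t h0t h1t, e2, sub_self]
        rw [hz, mul_zero]; exact zero_mem _
      rcases Nat.eq_zero_or_pos i with hi | hi
      · subst hi
        rw [hg0, zero_mul]; exact zero_mem _
      · exact hmono (by omega) (hmul _ _ _ _ (hgF i) (ih h0t h1t hFt hdifft j))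

private lemma coeff_pow_congr {R : Type*} [Semiring R] {f g : PowerSeries R} {r : ℕ}
    (h : ∀ i ≤ r, coeff i f = coeff i g) (n : ℕ) :
    ∀ i ≤ r, coeff i (f ^ n) = coeff i (g ^ n) := by
  induction n with
  | zero => intro i _; rfl
  | succ n ih =>
    intro i hi
    rw [pow_succ, pow_succ, coeff_mul, coeff_mul]
    apply Finset.sum_congr rfl
    rintro ⟨a, b⟩ hab
    rw [Finset.HasAntidiagonal.mem_antidiagonal] at hab
    rw [ih a (by omega), h b (by omega)]

private lemma coeff_pow_char {R : Type*} [CommRing R] (p : ℕ) [Fact p.Prime]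
    (hp : (p : R) = 0) (f : PowerSeries R) (r : ℕ) :
    coeff r (f ^ p) = if p ∣ r then (coeff (r / p) f) ^ p else 0 := by
  rcases subsingleton_or_nontrivial R with hR | hR
  · apply Subsingleton.elim
  have hpp : p.Prime := Fact.out
  have hdvd : ringChar R ∣ p := ringChar.dvd hp
  have hc : ringChar R = p := by
    rcases (Nat.Prime.eq_one_or_self_of_dvd hpp _ hdvd) with h | h
    · exact absurd h CharP.ringChar_ne_one
    · exact h
  haveI : CharP R p := hc ▸ ringChar.charP R
  haveI : ExpChar R p := .prime hpp
  set q : Polynomial R := trunc (r + 1) f with hq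
  have hagree : ∀ i ≤ r, coeff i f = coeff i (q : PowerSeries R) := by
    intro i hi
    rw [Polynomial.coeff_coe, hq, coeff_trunc, if_pos (by omega)]
  rw [coeff_pow_congr hagree p r le_rfl, ← Polynomial.coe_pow,
    ← Polynomial.map_frobenius_expand p q, Polynomial.coeff_coe, Polynomial.coeff_map,
    Polynomial.coeff_expand hpp.pos]
  split
  · rename_i hdv
    rw [hagree (r / p) (Nat.div_le_self r p), Polynomial.coeff_coe]
    rfl
  · exact map_zero (frobenius R p)


/-- **series of type IV, top coefficient.** Let `X^{(r)} ∈ F_{r-1} A`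
(`r ≥ 1`) be commuting elements, `X^{(0)} = 0`, and `X_IV^{(r)}` the `u^{-r}`-coefficient of
`∏_{i=1}^{p} Σ_s X^{(s)} (u-(i-1))^{-s}`. Then `X_IV^{(r)} = 0` for `r < p`;
`X_IV^{(p)} = (X^{(1)})^p ∈ F_0 A`; if `r > p`, `p ∣ r`: `X_IV^{(r)} ∈ F_{r-p} A` and
`X_IV^{(r)} ≡ (X^{(r/p)})^p mod F_{r-p-1} A`; if `r > p`, `p ∤ r`:
`X_IV^{(r)} ∈ F_{r-p-1} A`. -/
theorem typeIV_series
    (k : Type) [Field k] (p : ℕ) [Fact p.Prime] [CharP k p]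
    (A : Type) [Ring A] [Algebra k A]
    (F : ℕ → Submodule k A) (hmono : Monotone F) (hone : (1 : A) ∈ F 0)
    (hmul : ∀ r s : ℕ, ∀ x y : A, x ∈ F r → y ∈ F s → x * y ∈ F (r + s))
    (X : ℕ → A) (hX0 : X 0 = 0)
    (hXcomm : ∀ r s : ℕ, X r * X s = X s * X r)
    (hXF : ∀ r : ℕ, 1 ≤ r → X r ∈ F (r - 1)) :
    (∀ r : ℕ, r < p →
      PowerSeries.coeff r (((List.range p).map fun m => shiftSer A m X).prod) = 0) ∧
    (PowerSeries.coeff p (((List.range p).map fun m => shiftSer A m X).prod) = (X 1) ^ p ∧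
      (X 1) ^ p ∈ F 0) ∧
    (∀ r : ℕ, p < r → p ∣ r →
      PowerSeries.coeff r (((List.range p).map fun m => shiftSer A m X).prod) ∈ F (r - p) ∧
      PowerSeries.coeff r (((List.range p).map fun m => shiftSer A m X).prod)
        - (X (r / p)) ^ p ∈ F (r - p - 1)) ∧
    (∀ r : ℕ, p < r → ¬ p ∣ r →
      PowerSeries.coeff r (((List.range p).map fun m => shiftSer A m X).prod)
        ∈ F (r - p - 1)) := by
  classical
  set l : List (PowerSeries A) := (List.range p).map fun m => shiftSer A m X with hl
  have hlen : l.length = p := by simp [hl]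
  have hco : ∀ (m t : ℕ), PowerSeries.coeff t (shiftSer A m X)
      = ∑ s ∈ Finset.range (t + 1), (Nat.choose (t - 1) (t - s) * m ^ (t - s)) • X s := by
    intro m t; rw [shiftSer, PowerSeries.coeff_mk]
  have hs0 : ∀ m : ℕ, PowerSeries.coeff 0 (shiftSer A m X) = 0 := by
    intro m; rw [hco, Finset.sum_range_one, hX0, smul_zero]
  have hs1 : ∀ m : ℕ, PowerSeries.coeff 1 (shiftSer A m X) = X 1 := by
    intro m
    rw [hco, Finset.sum_range_succ, Finset.sum_range_one, hX0, smul_zero, zero_add]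
    simp
  have hsF : ∀ m t : ℕ, PowerSeries.coeff t (shiftSer A m X) ∈ F (t - 1) := by
    intro m t
    rw [hco]
    apply Submodule.sum_mem
    intro s hs
    rw [Finset.mem_range] at hs
    rcases Nat.eq_zero_or_pos s with h | h
    · subst h; rw [hX0, smul_zero]; exact zero_mem _
    · exact nsmul_mem (hmono (by omega) (hXF s h)) _
  have hsdiff : ∀ m t : ℕ, 2 ≤ t →
      PowerSeries.coeff t (shiftSer A m X) - X t ∈ F (t - 2) := by
    intro m t ht
    rw [hco, Finset.sum_range_succ]
    have e : (Nat.choose (t - 1) (t - t) * m ^ (t - t)) • X t = X t := by simp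
    rw [e, add_sub_cancel_right]
    apply Submodule.sum_mem
    intro s hs
    rw [Finset.mem_range] at hs
    rcases Nat.eq_zero_or_pos s with h | h
    · subst h; rw [hX0, smul_zero]; exact zero_mem _
    · exact nsmul_mem (hmono (by omega) (hXF s h)) _
  have hmem : ∀ f ∈ l, ∃ m : ℕ, f = shiftSer A m X := by
    intro f hf
    rw [hl, List.mem_map] at hf
    obtain ⟨m, _, rfl⟩ := hf
    exact ⟨m, rfl⟩
  have hl0 : ∀ f ∈ l, PowerSeries.coeff 0 f = 0 := by
    intro f hf; obtain ⟨m, rfl⟩ := hmem f hf; exact hs0 m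
  have hl1 : ∀ f ∈ l, PowerSeries.coeff 1 f = X 1 := by
    intro f hf; obtain ⟨m, rfl⟩ := hmem f hf; exact hs1 m
  have hlF : ∀ f ∈ l, ∀ t, PowerSeries.coeff t f ∈ F (t - 1) := by
    intro f hf t; obtain ⟨m, rfl⟩ := hmem f hf; exact hsF m t
  have hldiff : ∀ f ∈ l, ∀ t, 2 ≤ t → PowerSeries.coeff t f - X t ∈ F (t - 2) := by
    intro f hf t ht; obtain ⟨m, rfl⟩ := hmem f hf; exact hsdiff m t ht
  have hpow0 : ∀ x : A, x ∈ F 0 → ∀ n : ℕ, x ^ n ∈ F 0 := by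
    intro x hx n
    induction n with
    | zero => simpa using hone
    | succ n ih => rw [pow_succ]; exact hmul 0 0 _ _ ih hx
  -- the reference series and characteristic-p computation
  let B : Subring A := Subring.closure (Set.range X)
  letI : CommRing B := Subring.closureCommRingOfComm (by
    rintro x ⟨i, rfl⟩ y ⟨j, rfl⟩; exact hXcomm i j)
  let Y : ℕ → B := fun n => ⟨X n, Subring.subset_closure ⟨n, rfl⟩⟩
  have hpA : (p : A) = 0 := by
    have h1 : ((p : ℕ) : k) = 0 := CharP.cast_eq_zero k p
    rw [← map_natCast (algebraMap k A) p, h1, map_zero]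
  have hpB : (p : B) = 0 := by
    apply Subtype.ext
    simpa using hpA
  have hmap : PowerSeries.map B.subtype (PowerSeries.mk Y) = PowerSeries.mk X := by
    ext n
    rw [PowerSeries.coeff_map, PowerSeries.coeff_mk, PowerSeries.coeff_mk]
    rfl
  have hB : ∀ r : ℕ, PowerSeries.coeff r ((PowerSeries.mk X) ^ p)
      = if p ∣ r then (X (r / p)) ^ p else 0 := by
    intro r
    rw [← hmap, ← map_pow, PowerSeries.coeff_map, coeff_pow_char p hpB (PowerSeries.mk Y) r]
    split
    · rw [PowerSeries.coeff_mk, map_pow]; rfl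
    · exact map_zero B.subtype
  have hdiffmain : ∀ r : ℕ,
      PowerSeries.coeff r (l.prod - (PowerSeries.mk X) ^ p) ∈ F (r - p - 1) := by
    intro r
    have h := auxD hmono hone hmul X hX0 (fun t ht => hXF t ht) l hl0 hl1 hlF hldiff r
    rwa [hlen] at h
  refine ⟨?_, ⟨?_, ?_⟩, ?_, ?_⟩
  · intro r hr
    exact auxA l hl0 r (by rw [hlen]; exact hr)
  · have h := auxB l hl0
    rw [hlen] at h
    rw [h, List.prod_eq_pow_card _ (X 1) ?_, List.length_map, hlen]
    intro x hx
    rw [List.mem_map] at hx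
    obtain ⟨a, ha, rfl⟩ := hx
    exact hl1 a ha
  · exact hpow0 _ (by simpa using hXF 1 le_rfl) p
  · intro r hrp hdvd
    constructor
    · have h := auxC hmono hone hmul l hl0 hlF r
      rwa [hlen] at h
    · have h1 := hdiffmain r
      rw [map_sub, hB r, if_pos hdvd] at h1
      exact h1
  · intro r hrp hdvd
    have h1 := hdiffmain r
    rw [map_sub, hB r, if_neg hdvd, sub_zero] at h1
    exact h1
end

section
/- Let k be a field of characteristic p > 0 (p prime) and let f ∈ k[x_1,…,x_p] be a symmetric polynomial that is homogeneous of degree l with 0 < l < p−1. Then f(0, 1, 2, …, p−1) = 0 (evaluation at x_i = i−1 for i = 1,…,p, the values taken in k). -/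
lemma eval_mul_of_isHomogeneous {R σ : Type*} [CommSemiring R] {f : MvPolynomial σ R} {n : ℕ}
    (hf : f.IsHomogeneous n) (c : R) (v : σ → R) :
    MvPolynomial.eval (fun i => c * v i) f = c ^ n * MvPolynomial.eval v f := by
  rw [MvPolynomial.eval_eq, MvPolynomial.eval_eq, Finset.mul_sum]
  refine Finset.sum_congr rfl fun d hd => ?_
  have hdeg : (Finsupp.weight 1 d : ℕ) = n := hf (MvPolynomial.mem_support_iff.mp hd)
  simp_rw [mul_pow, Finset.prod_mul_distrib, Finset.prod_pow_eq_pow_sum]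
  have : ∑ i ∈ d.support, d i = n := by
    rw [← hdeg]; simp [Finsupp.weight_apply, Finsupp.sum, mul_comm]
  rw [this]; ring

/-- Over a field `k` of characteristic `p > 0`, a symmetric polynomial
`f ∈ k[x_1,…,x_p]` that is homogeneous of degree `l` with `0 < l < p−1` vanishes at
`(x_1,…,x_p) = (0,1,…,p−1)`. -/
theorem symmetric_homogeneous_vanishes_at_zero_to_p_minus_one
    (k : Type) [Field k] (p : ℕ) [Fact p.Prime] [CharP k p]
    (f : MvPolynomial (Fin p) k) (hsym : f.IsSymmetric)
    (l : ℕ) (hhom : f.IsHomogeneous l) (hl0 : 0 < l) (hl1 : l < p - 1) :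
    MvPolynomial.eval (fun i : Fin p => ((i : ℕ) : k)) f = 0 := by
  have hp : p.Prime := Fact.out
  haveI : NeZero p := ⟨hp.ne_zero⟩
  -- the equivalence Fin p ≃ ZMod p
  let e : Fin p ≃ ZMod p :=
    { toFun := fun i => ((i : ℕ) : ZMod p)
      invFun := fun x => ⟨x.val, ZMod.val_lt x⟩
      left_inv := fun i => by
        ext; simp [ZMod.val_cast_of_lt i.isLt]
      right_inv := fun x => by simp [ZMod.natCast_val, ZMod.cast_id] }
  obtain ⟨u, hu⟩ := IsCyclic.exists_generator (α := (ZMod p)ˣ)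
  set c : ZMod p := (u : ZMod p) with hc
  have hc0 : c ≠ 0 := u.ne_zero
  let σ : Equiv.Perm (Fin p) := e.trans ((Equiv.mulLeft₀ c hc0).trans e.symm)
  let φ : ZMod p →+* k := ZMod.castHom dvd_rfl k
  set v : Fin p → k := fun i : Fin p => ((i : ℕ) : k) with hv
  have hkey : ∀ i, v (σ i) = φ c * v i := by
    intro i
    have : v (σ i) = φ ((σ i : ℕ) : ZMod p) := by simp [hv, map_natCast]
    rw [this]
    have h2 : (((σ i : ℕ)) : ZMod p) = c * ((i : ℕ) : ZMod p) := by
      show (((⟨(c * ((i:ℕ):ZMod p)).val, _⟩ : Fin p) : ℕ) : ZMod p) = _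
      simp [ZMod.natCast_val, ZMod.cast_id]
    rw [h2, map_mul, map_natCast]
  have heq : MvPolynomial.eval v f = (φ c) ^ l * MvPolynomial.eval v f := by
    conv_lhs => rw [← hsym σ, MvPolynomial.eval_rename]
    have : (v ∘ σ) = fun i => φ c * v i := funext fun i => hkey i
    rw [this, eval_mul_of_isHomogeneous hhom]
  have hne : (φ c) ^ l ≠ 1 := by
    intro h
    have hcl : c ^ l = 1 := by
      apply φ.injective
      rw [map_pow, h, map_one]
    have hul : u ^ l = 1 := by
      ext; push_cast; exact hcl
    have hord : orderOf u = p - 1 := by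
      rw [orderOf_eq_card_of_forall_mem_zpowers hu, Nat.card_eq_fintype_card,
        ZMod.card_units_eq_totient, Nat.totient_prime hp]
    have := orderOf_dvd_of_pow_eq_one hul
    rw [hord] at this
    exact absurd (Nat.le_of_dvd hl0 this) (not_le.mpr hl1)
  by_contra hX
  field_simp at heq
  exact hne heq.symm
end
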